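/- arXiv:2605.10872 — 4 statements merged into one kernel-verified Lean document; each statement's English description precedes it below -/
import Mathlib

section
/- Let A, Q, X, Y be random variables on a common probability space, each taking finitely many values, and let Z = f(X) for some function f of the values of X. If H(A | ⟨Q, X⟩) = 0 and I(Y ; X | Q) = 0, then I(Y ; A | ⟨Q, Z⟩) = 0. -/
open MeasureTheory

/-- Shannon entropy (in nats) of a random variable `X` taking finitely many values,
with the convention `0 log 0 = 0`. -/
noncomputable def entropy {Ω : Type*} [MeasurableSpace Ω] {S : Type*} [Fintype S]
    (μ : Measure Ω) (X : Ω → S) : ℝ :=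
  -∑ s : S, (μ (X ⁻¹' {s})).toReal * Real.log (μ (X ⁻¹' {s})).toReal

/-- Conditional entropy `H(X | Y)`, defined via the chain rule `H(X | Y) = H(X, Y) − H(Y)`. -/
noncomputable def condEntropy {Ω : Type*} [MeasurableSpace Ω] {S T : Type*} [Fintype S]
    [Fintype T] (μ : Measure Ω) (X : Ω → S) (Y : Ω → T) : ℝ :=
  entropy μ (fun ω => (X ω, Y ω)) - entropy μ Y

/-- Mutual information `I(X ; Y) = H(X) − H(X | Y)`. -/
noncomputable def mutualInfo {Ω : Type*} [MeasurableSpace Ω] {S T : Type*} [Fintype S]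
    [Fintype T] (μ : Measure Ω) (X : Ω → S) (Y : Ω → T) : ℝ :=
  entropy μ X - condEntropy μ X Y

/-- Conditional mutual information `I(X ; Y | Z) = H(X | Z) + H(Y | Z) − H(X, Y | Z)`. -/
noncomputable def condMutualInfo {Ω : Type*} [MeasurableSpace Ω] {S T U : Type*} [Fintype S]
    [Fintype T] [Fintype U] (μ : Measure Ω) (X : Ω → S) (Y : Ω → T) (Z : Ω → U) : ℝ :=
  condEntropy μ X Z + condEntropy μ Y Z - condEntropy μ (fun ω => (X ω, Y ω)) Z

section Core

variable {Ω : Type*} [MeasurableSpace Ω] (μ : Measure Ω) [IsProbabilityMeasure μ]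

lemma push {S T : Type*} [Fintype S] [DecidableEq T] (J : Ω → S)
    (hJ : ∀ s, MeasurableSet (J ⁻¹' {s})) (g : S → T) (t : T) :
    (μ ((fun ω => g (J ω)) ⁻¹' {t})).toReal
      = ∑ s ∈ Finset.univ.filter (fun s => g s = t), (μ (J ⁻¹' {s})).toReal := by
  classical
  have hset : (fun ω => g (J ω)) ⁻¹' {t}
      = ⋃ s ∈ Finset.univ.filter (fun s => g s = t), J ⁻¹' {s} := by
    ext ω; simp [eq_comm]
  rw [hset, measure_biUnion_finset ?_ (fun s _ => hJ s),
    ENNReal.toReal_sum (fun s _ => measure_ne_top μ _)]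
  intro s _ s' _ hss
  exact Set.disjoint_left.2 fun ω h h' => hss (by
    simp only [Set.mem_preimage, Set.mem_singleton_iff] at h h'
    rw [← h, ← h'])

lemma comp_meas {S T : Type*} [Fintype S] (J : Ω → S)
    (hJ : ∀ s, MeasurableSet (J ⁻¹' {s})) (g : S → T) :
    ∀ t, MeasurableSet ((fun ω => g (J ω)) ⁻¹' {t}) := by
  classical
  intro t
  have hset : (fun ω => g (J ω)) ⁻¹' {t}
      = ⋃ s ∈ Finset.univ.filter (fun s => g s = t), J ⁻¹' {s} := by
    ext ω; simp [eq_comm]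
  rw [hset]
  exact Finset.measurableSet_biUnion _ (fun s _ => hJ s)

lemma sum_mul_log_le {S T : Type*} [Fintype S] [Fintype T] [DecidableEq T] (p : S → ℝ) (q : T → ℝ) (g : S → T)
    (hp : ∀ s, 0 ≤ p s)
    (hq : ∀ t, q t = ∑ s ∈ Finset.univ.filter (fun s => g s = t), p s) :
    ∑ s, p s * Real.log (p s) ≤ ∑ t, q t * Real.log (q t) := by
  classical
  have hpq : ∀ s, p s ≤ q (g s) := by
    intro s
    rw [hq]
    exact Finset.single_le_sum (fun i _ => hp i) (Finset.mem_filter.2 ⟨Finset.mem_univ s, rfl⟩)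
  have key : ∑ t, q t * Real.log (q t) = ∑ s, p s * Real.log (q (g s)) := by
    rw [← Finset.sum_fiberwise_of_maps_to (fun s _ => Finset.mem_univ (g s))
      (fun s => p s * Real.log (q (g s)))]
    refine Finset.sum_congr rfl fun t _ => ?_
    rw [hq t, Finset.sum_mul]
    refine Finset.sum_congr rfl fun s hs => ?_
    simp only [Finset.mem_filter, Finset.mem_univ, true_and] at hs
    rw [hs, hq]
  rw [key]
  refine Finset.sum_le_sum fun s _ => ?_
  rcases eq_or_lt_of_le (hp s) with h | h
  · rw [← h]; simp
  · exact mul_le_mul_of_nonneg_left (Real.log_le_log h (hpq s)) (hp s)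

lemma entropy_comp_le {S T : Type*} [Fintype S] [Fintype T] (J : Ω → S)
    (hJ : ∀ s, MeasurableSet (J ⁻¹' {s})) (g : S → T) :
    entropy μ (fun ω => g (J ω)) ≤ entropy μ J := by
  classical
  unfold entropy
  apply neg_le_neg
  exact sum_mul_log_le (fun s => (μ (J ⁻¹' {s})).toReal)
    (fun t => (μ ((fun ω => g (J ω)) ⁻¹' {t})).toReal) g
    (fun s => ENNReal.toReal_nonneg) (fun t => push μ J hJ g t)

lemma entropy_congr {S T T' : Type*} [Fintype S] [Fintype T] [Fintype T'] (J : Ω → S)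
    (hJ : ∀ s, MeasurableSet (J ⁻¹' {s})) (g : S → T) (g' : S → T') (σ : T' → T) (τ : T → T')
    (h1 : ∀ s, σ (g' s) = g s) (h2 : ∀ s, τ (g s) = g' s) :
    entropy μ (fun ω => g (J ω)) = entropy μ (fun ω => g' (J ω)) := by
  apply le_antisymm
  · have h := entropy_comp_le μ (fun ω => g' (J ω)) (comp_meas J hJ g') σ
    simpa only [h1] using h
  · have h := entropy_comp_le μ (fun ω => g (J ω)) (comp_meas J hJ g) τ
    simpa only [h2] using h

end Core

section Key

open Finset

lemma key_ineq {S T R : Type*} [Fintype S] [Fintype T] [Fintype R]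
    (p : S × T × R → ℝ) (a : S × R → ℝ) (b : T × R → ℝ) (c : R → ℝ)
    (hp : ∀ x, 0 ≤ p x)
    (ha : ∀ s r, a (s, r) = ∑ t, p (s, t, r))
    (hb : ∀ t r, b (t, r) = ∑ s, p (s, t, r))
    (hc : ∀ r, c r = ∑ s, ∑ t, p (s, t, r)) :
    ∑ y, a y * Real.log (a y) + ∑ z, b z * Real.log (b z)
      ≤ ∑ x, p x * Real.log (p x) + ∑ r, c r * Real.log (c r) := by
  classical
  have ha0 : ∀ y, 0 ≤ a y := by
    rintro ⟨s, r⟩; rw [ha]; exact Finset.sum_nonneg fun t _ => hp _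
  have hb0 : ∀ z, 0 ≤ b z := by
    rintro ⟨t, r⟩; rw [hb]; exact Finset.sum_nonneg fun s _ => hp _
  have hc0 : ∀ r, 0 ≤ c r := by
    intro r; rw [hc]; exact Finset.sum_nonneg fun s _ => Finset.sum_nonneg fun t _ => hp _
  have hpa : ∀ x : S × T × R, p x ≤ a (x.1, x.2.2) := by
    intro x; rw [ha]
    exact Finset.single_le_sum (f := fun t => p (x.1, t, x.2.2)) (fun i _ => hp _)
      (Finset.mem_univ x.2.1)
  have hpb : ∀ x : S × T × R, p x ≤ b (x.2.1, x.2.2) := by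
    intro x; rw [hb]
    exact Finset.single_le_sum (f := fun s => p (s, x.2.1, x.2.2)) (fun i _ => hp _)
      (Finset.mem_univ x.1)
  have hpc : ∀ x : S × T × R, p x ≤ c x.2.2 := by
    intro x; rw [hc]
    calc p x ≤ ∑ t, p (x.1, t, x.2.2) :=
          Finset.single_le_sum (f := fun t => p (x.1, t, x.2.2)) (fun i _ => hp _)
            (Finset.mem_univ x.2.1)
      _ ≤ ∑ s, ∑ t, p (s, t, x.2.2) :=
          Finset.single_le_sum (f := fun s => ∑ t, p (s, t, x.2.2))
            (fun s _ => Finset.sum_nonneg fun t _ => hp _) (Finset.mem_univ x.1)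
  -- the pointwise bound
  have hterm : ∀ x : S × T × R,
      p x - (if 0 < c x.2.2 then a (x.1, x.2.2) * b (x.2.1, x.2.2) / c x.2.2 else 0)
        ≤ p x * Real.log (p x) + p x * Real.log (c x.2.2)
          - p x * Real.log (a (x.1, x.2.2)) - p x * Real.log (b (x.2.1, x.2.2)) := by
    intro x
    rcases eq_or_lt_of_le (hp x) with h | h
    · rw [← h]
      simp only [zero_mul, add_zero, sub_zero, zero_sub, zero_add, neg_zero]
      split_ifs with hcpos
      · exact neg_nonpos.mpr (div_nonneg (mul_nonneg (ha0 _) (hb0 _)) (hc0 _))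
      · simp
    · have hA : 0 < a (x.1, x.2.2) := lt_of_lt_of_le h (hpa x)
      have hB : 0 < b (x.2.1, x.2.2) := lt_of_lt_of_le h (hpb x)
      have hC : 0 < c x.2.2 := lt_of_lt_of_le h (hpc x)
      rw [if_pos hC]
      have hlog : Real.log ((a (x.1, x.2.2) * b (x.2.1, x.2.2)) / (p x * c x.2.2))
          ≤ (a (x.1, x.2.2) * b (x.2.1, x.2.2)) / (p x * c x.2.2) - 1 :=
        Real.log_le_sub_one_of_pos (by positivity)
      rw [Real.log_div (by positivity) (by positivity),
        Real.log_mul (ne_of_gt hA) (ne_of_gt hB),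
        Real.log_mul (ne_of_gt h) (ne_of_gt hC)] at hlog
      have h2 := mul_le_mul_of_nonneg_left hlog (le_of_lt h)
      have h3 : p x * ((a (x.1, x.2.2) * b (x.2.1, x.2.2)) / (p x * c x.2.2) - 1)
          = a (x.1, x.2.2) * b (x.2.1, x.2.2) / c x.2.2 - p x := by
        field_simp
      rw [h3] at h2
      nlinarith [h2]
  have hexp : ∀ F : S × T × R → ℝ, ∑ x, F x = ∑ s, ∑ t, ∑ r, F (s, t, r) := by
    intro F
    rw [Fintype.sum_prod_type]
    exact Finset.sum_congr rfl fun s _ => Fintype.sum_prod_type _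
  have reorder : ∀ F : S → T → R → ℝ,
      (∑ s, ∑ t, ∑ r, F s t r) = ∑ r, ∑ s, ∑ t, F s t r := by
    intro F
    calc (∑ s, ∑ t, ∑ r, F s t r) = ∑ s, ∑ r, ∑ t, F s t r :=
          Finset.sum_congr rfl fun s _ => Finset.sum_comm
      _ = ∑ r, ∑ s, ∑ t, F s t r := Finset.sum_comm
  have hsum1 : ∑ x : S × T × R, p x = ∑ r, c r := by
    have e : ∑ x : S × T × R, p x = ∑ s, ∑ t, ∑ r, p (s, t, r) := hexp _
    rw [e, reorder]
    exact Finset.sum_congr rfl fun r _ => (hc r).symm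
  have hsumG : (∑ x : S × T × R,
      if 0 < c x.2.2 then a (x.1, x.2.2) * b (x.2.1, x.2.2) / c x.2.2 else 0) = ∑ r, c r := by
    have e : (∑ x : S × T × R,
        if 0 < c x.2.2 then a (x.1, x.2.2) * b (x.2.1, x.2.2) / c x.2.2 else 0)
        = ∑ s, ∑ t, ∑ r, if 0 < c r then a (s, r) * b (t, r) / c r else 0 := hexp _
    rw [e, reorder]
    refine Finset.sum_congr rfl fun r _ => ?_
    by_cases hr : 0 < c r
    · simp only [if_pos hr]
      have hA : ∑ s, a (s, r) = c r := by
        rw [hc]; exact Finset.sum_congr rfl fun s _ => ha s r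
      have hB : ∑ t, b (t, r) = c r := by
        rw [hc, Finset.sum_comm]; exact Finset.sum_congr rfl fun t _ => hb t r
      have e1 : ∀ s, ∑ t, a (s, r) * b (t, r) / c r = a (s, r) := by
        intro s
        calc ∑ t, a (s, r) * b (t, r) / c r = ∑ t, a (s, r) / c r * b (t, r) :=
              Finset.sum_congr rfl fun t _ => by ring
          _ = a (s, r) / c r * ∑ t, b (t, r) := (Finset.mul_sum _ _ _).symm
          _ = a (s, r) := by rw [hB]; field_simp
      calc (∑ s, ∑ t, a (s, r) * b (t, r) / c r) = ∑ s, a (s, r) :=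
            Finset.sum_congr rfl fun s _ => e1 s
        _ = c r := hA
    · simp only [if_neg hr, Finset.sum_const_zero]
      exact (le_antisymm (not_lt.1 hr) (hc0 r)).symm
  have hF : ∑ x : S × T × R, (p x -
      (if 0 < c x.2.2 then a (x.1, x.2.2) * b (x.2.1, x.2.2) / c x.2.2 else 0))
      ≤ ∑ x : S × T × R, (p x * Real.log (p x) + p x * Real.log (c x.2.2)
          - p x * Real.log (a (x.1, x.2.2)) - p x * Real.log (b (x.2.1, x.2.2))) :=
    Finset.sum_le_sum fun x _ => hterm x
  rw [Finset.sum_sub_distrib, hsum1, hsumG, sub_self] at hF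
  have hsplit : ∑ x : S × T × R, (p x * Real.log (p x) + p x * Real.log (c x.2.2)
      - p x * Real.log (a (x.1, x.2.2)) - p x * Real.log (b (x.2.1, x.2.2)))
      = (∑ x : S × T × R, p x * Real.log (p x)) + (∑ x : S × T × R, p x * Real.log (c x.2.2))
        - (∑ x : S × T × R, p x * Real.log (a (x.1, x.2.2)))
        - (∑ x : S × T × R, p x * Real.log (b (x.2.1, x.2.2))) := by
    rw [Finset.sum_sub_distrib, Finset.sum_sub_distrib, Finset.sum_add_distrib]
  rw [hsplit] at hF
  have d1 : ∑ x : S × T × R, p x * Real.log (c x.2.2) = ∑ r, c r * Real.log (c r) := by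
    have e : ∑ x : S × T × R, p x * Real.log (c x.2.2)
        = ∑ s, ∑ t, ∑ r, p (s, t, r) * Real.log (c r) := hexp _
    rw [e, reorder]
    refine Finset.sum_congr rfl fun r _ => ?_
    rw [hc, Finset.sum_mul]
    exact Finset.sum_congr rfl fun s _ => (Finset.sum_mul _ _ _).symm
  have d2 : ∑ x : S × T × R, p x * Real.log (a (x.1, x.2.2))
      = ∑ y : S × R, a y * Real.log (a y) := by
    have e : ∑ x : S × T × R, p x * Real.log (a (x.1, x.2.2))
        = ∑ s, ∑ t, ∑ r, p (s, t, r) * Real.log (a (s, r)) := hexp _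
    rw [e, Fintype.sum_prod_type]
    refine Finset.sum_congr rfl fun s _ => ?_
    rw [Finset.sum_comm]
    refine Finset.sum_congr rfl fun r _ => ?_
    rw [ha, Finset.sum_mul]
  have d3 : ∑ x : S × T × R, p x * Real.log (b (x.2.1, x.2.2))
      = ∑ z : T × R, b z * Real.log (b z) := by
    have e : ∑ x : S × T × R, p x * Real.log (b (x.2.1, x.2.2))
        = ∑ s, ∑ t, ∑ r, p (s, t, r) * Real.log (b (t, r)) := hexp _
    rw [e, Fintype.sum_prod_type]
    rw [Finset.sum_comm]
    refine Finset.sum_congr rfl fun t _ => ?_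
    rw [Finset.sum_comm]
    refine Finset.sum_congr rfl fun r _ => ?_
    rw [hb, Finset.sum_mul]
  linarith [hF]

end Key

section Glue

open Finset

lemma conv_a {S T R : Type*} [Fintype S] [Fintype T] [Fintype R] [DecidableEq S] [DecidableEq R]
    (F : S × T × R → ℝ) (s : S) (r : R) :
    ∑ x ∈ univ.filter (fun x : S × T × R => (x.1, x.2.2) = (s, r)), F x = ∑ t, F (s, t, r) := by
  refine Finset.sum_nbij' (fun x => x.2.1) (fun t => (s, t, r)) ?_ ?_ ?_ ?_ ?_
  · intro x _; exact mem_univ _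
  · rintro t _; simp
  · rintro ⟨x1, x2, x3⟩ hx
    simp only [mem_filter, mem_univ, true_and, Prod.mk.injEq] at hx
    simp [hx.1, hx.2]
  · intro t _; rfl
  · rintro ⟨x1, x2, x3⟩ hx
    simp only [mem_filter, mem_univ, true_and, Prod.mk.injEq] at hx
    rw [hx.1, hx.2]

lemma conv_b {S T R : Type*} [Fintype S] [Fintype T] [Fintype R] [DecidableEq T] [DecidableEq R]
    (F : S × T × R → ℝ) (t : T) (r : R) :
    ∑ x ∈ univ.filter (fun x : S × T × R => (x.2.1, x.2.2) = (t, r)), F x = ∑ s, F (s, t, r) := by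
  refine Finset.sum_nbij' (fun x => x.1) (fun s => (s, t, r)) ?_ ?_ ?_ ?_ ?_
  · intro x _; exact mem_univ _
  · rintro s _; simp
  · rintro ⟨x1, x2, x3⟩ hx
    simp only [mem_filter, mem_univ, true_and, Prod.mk.injEq] at hx
    simp [hx.1, hx.2]
  · intro s _; rfl
  · rintro ⟨x1, x2, x3⟩ hx
    simp only [mem_filter, mem_univ, true_and, Prod.mk.injEq] at hx
    rw [hx.1, hx.2]

lemma conv_c {S T R : Type*} [Fintype S] [Fintype T] [Fintype R] [DecidableEq R]
    (F : S × T × R → ℝ) (r : R) :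
    ∑ x ∈ univ.filter (fun x : S × T × R => x.2.2 = r), F x = ∑ s, ∑ t, F (s, t, r) := by
  have h : ∑ x ∈ univ.filter (fun x : S × T × R => x.2.2 = r), F x
      = ∑ y : S × T, F (y.1, y.2, r) := by
    refine Finset.sum_nbij' (fun x => (x.1, x.2.1)) (fun y => (y.1, y.2, r)) ?_ ?_ ?_ ?_ ?_
    · intro x _; exact mem_univ _
    · rintro y _; simp
    · rintro ⟨x1, x2, x3⟩ hx
      simp only [mem_filter, mem_univ, true_and] at hx
      simp [hx]
    · intro y _; rfl
    · rintro ⟨x1, x2, x3⟩ hx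
      simp only [mem_filter, mem_univ, true_and] at hx
      rw [hx]
  rw [h, Fintype.sum_prod_type]

variable {Ω : Type*} [MeasurableSpace Ω] (μ : Measure Ω) [IsProbabilityMeasure μ]

lemma submod' {S1 S2 S3 : Type*} [Fintype S1] [Fintype S2] [Fintype S3]
    (U : Ω → S1) (V : Ω → S2) (W : Ω → S3)
    (hJ : ∀ s, MeasurableSet ((fun ω => (U ω, V ω, W ω)) ⁻¹' {s})) :
    entropy μ (fun ω => (U ω, V ω, W ω)) + entropy μ W
      ≤ entropy μ (fun ω => (U ω, W ω)) + entropy μ (fun ω => (V ω, W ω)) := by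
  classical
  have ha : ∀ st : S1 × S3, (μ ((fun ω => (U ω, W ω)) ⁻¹' {st})).toReal
      = ∑ t, (μ ((fun ω => (U ω, V ω, W ω)) ⁻¹' {(st.1, t, st.2)})).toReal := by
    rintro ⟨s, r⟩
    have h1 : (μ ((fun ω => (U ω, W ω)) ⁻¹' {(s, r)})).toReal
        = ∑ x ∈ univ.filter (fun x : S1 × S2 × S3 => (x.1, x.2.2) = (s, r)),
            (μ ((fun ω => (U ω, V ω, W ω)) ⁻¹' {x})).toReal :=
      push μ _ hJ (fun x => (x.1, x.2.2)) (s, r)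
    rw [h1, conv_a]
  have hb : ∀ st : S2 × S3, (μ ((fun ω => (V ω, W ω)) ⁻¹' {st})).toReal
      = ∑ s, (μ ((fun ω => (U ω, V ω, W ω)) ⁻¹' {(s, st.1, st.2)})).toReal := by
    rintro ⟨t, r⟩
    have h1 : (μ ((fun ω => (V ω, W ω)) ⁻¹' {(t, r)})).toReal
        = ∑ x ∈ univ.filter (fun x : S1 × S2 × S3 => (x.2.1, x.2.2) = (t, r)),
            (μ ((fun ω => (U ω, V ω, W ω)) ⁻¹' {x})).toReal :=
      push μ _ hJ (fun x => (x.2.1, x.2.2)) (t, r)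
    rw [h1, conv_b]
  have hc : ∀ r : S3, (μ (W ⁻¹' {r})).toReal
      = ∑ s, ∑ t, (μ ((fun ω => (U ω, V ω, W ω)) ⁻¹' {(s, t, r)})).toReal := by
    intro r
    have h1 : (μ (W ⁻¹' {r})).toReal
        = ∑ x ∈ univ.filter (fun x : S1 × S2 × S3 => x.2.2 = r),
            (μ ((fun ω => (U ω, V ω, W ω)) ⁻¹' {x})).toReal :=
      push μ _ hJ (fun x => x.2.2) r
    rw [h1]; exact conv_c _ r
  have hkey : (∑ y : S1 × S3, (μ ((fun ω => (U ω, W ω)) ⁻¹' {y})).toReal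
          * Real.log (μ ((fun ω => (U ω, W ω)) ⁻¹' {y})).toReal)
        + (∑ z : S2 × S3, (μ ((fun ω => (V ω, W ω)) ⁻¹' {z})).toReal
          * Real.log (μ ((fun ω => (V ω, W ω)) ⁻¹' {z})).toReal)
      ≤ (∑ x : S1 × S2 × S3, (μ ((fun ω => (U ω, V ω, W ω)) ⁻¹' {x})).toReal
          * Real.log (μ ((fun ω => (U ω, V ω, W ω)) ⁻¹' {x})).toReal)
        + (∑ r : S3, (μ (W ⁻¹' {r})).toReal * Real.log (μ (W ⁻¹' {r})).toReal) :=
    key_ineq (fun x => (μ ((fun ω => (U ω, V ω, W ω)) ⁻¹' {x})).toReal)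
      (fun y => (μ ((fun ω => (U ω, W ω)) ⁻¹' {y})).toReal)
      (fun z => (μ ((fun ω => (V ω, W ω)) ⁻¹' {z})).toReal)
      (fun r => (μ (W ⁻¹' {r})).toReal)
      (fun _ => ENNReal.toReal_nonneg)
      (fun s r => ha (s, r)) (fun t r => hb (t, r)) hc
  unfold entropy
  linarith [hkey]

end Glue

section Info

variable {Ω : Type*} [MeasurableSpace Ω] (μ : Measure Ω) [IsProbabilityMeasure μ]
variable {M : Type*} [Fintype M] (J : Ω → M)

lemma cmi_nonneg {U V W : Type*} [Fintype U] [Fintype V] [Fintype W]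
    (hJ : ∀ m, MeasurableSet (J ⁻¹' {m})) (u : M → U) (v : M → V) (w : M → W) :
    0 ≤ condMutualInfo μ (fun ω => u (J ω)) (fun ω => v (J ω)) (fun ω => w (J ω)) := by
  have hsub : entropy μ (fun ω => (u (J ω), v (J ω), w (J ω))) + entropy μ (fun ω => w (J ω))
      ≤ entropy μ (fun ω => (u (J ω), w (J ω))) + entropy μ (fun ω => (v (J ω), w (J ω))) :=
    submod' μ (fun ω => u (J ω)) (fun ω => v (J ω)) (fun ω => w (J ω))
      (comp_meas J hJ (fun m => (u m, v m, w m)))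
  have hre : entropy μ (fun ω => ((u (J ω), v (J ω)), w (J ω)))
      = entropy μ (fun ω => (u (J ω), v (J ω), w (J ω))) :=
    entropy_congr μ J hJ (fun m => ((u m, v m), w m)) (fun m => (u m, v m, w m))
      (fun x => ((x.1, x.2.1), x.2.2)) (fun x => (x.1.1, x.1.2, x.2))
      (fun m => rfl) (fun m => rfl)
  simp only [condMutualInfo, condEntropy]
  linarith [hsub, hre]

lemma condEntropy_nonneg {U W : Type*} [Fintype U] [Fintype W]
    (hJ : ∀ m, MeasurableSet (J ⁻¹' {m})) (u : M → U) (w : M → W) :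
    0 ≤ condEntropy μ (fun ω => u (J ω)) (fun ω => w (J ω)) := by
  have h : entropy μ (fun ω => w (J ω)) ≤ entropy μ (fun ω => (u (J ω), w (J ω))) :=
    entropy_comp_le μ (fun ω => (u (J ω), w (J ω))) (comp_meas J hJ (fun m => (u m, w m)))
      Prod.snd
  simp only [condEntropy]
  linarith [h]

lemma cond_det {W G : Type*} [Fintype W] [Fintype G]
    (hJ : ∀ m, MeasurableSet (J ⁻¹' {m})) (w : M → W) (g : W → G) :
    condEntropy μ (fun ω => g (w (J ω))) (fun ω => w (J ω)) = 0 := by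
  have hre : entropy μ (fun ω => (g (w (J ω)), w (J ω))) = entropy μ (fun ω => w (J ω)) :=
    entropy_congr μ J hJ (fun m => (g (w m), w m)) (fun m => w m)
      (fun t => (g t, t)) Prod.snd (fun m => rfl) (fun m => rfl)
  simp only [condEntropy]
  linarith [hre]

lemma chain_rule {DY DU DV DQ : Type*} [Fintype DY] [Fintype DU] [Fintype DV] [Fintype DQ]
    (hJ : ∀ m, MeasurableSet (J ⁻¹' {m})) (y : M → DY) (u : M → DU) (v : M → DV) (q : M → DQ) :
    condMutualInfo μ (fun ω => y (J ω)) (fun ω => (u (J ω), v (J ω))) (fun ω => q (J ω))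
      = condMutualInfo μ (fun ω => y (J ω)) (fun ω => u (J ω)) (fun ω => q (J ω))
        + condMutualInfo μ (fun ω => y (J ω)) (fun ω => v (J ω))
            (fun ω => (q (J ω), u (J ω))) := by
  have e1 : entropy μ (fun ω => ((y (J ω), u (J ω)), q (J ω)))
      = entropy μ (fun ω => (y (J ω), (q (J ω), u (J ω)))) :=
    entropy_congr μ J hJ (fun m => ((y m, u m), q m)) (fun m => (y m, (q m, u m)))
      (fun x => ((x.1, x.2.2), x.2.1)) (fun x => (x.1.1, (x.2, x.1.2)))
      (fun m => rfl) (fun m => rfl)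
  have e2 : entropy μ (fun ω => (u (J ω), q (J ω)))
      = entropy μ (fun ω => (q (J ω), u (J ω))) :=
    entropy_congr μ J hJ (fun m => (u m, q m)) (fun m => (q m, u m))
      Prod.swap Prod.swap (fun m => rfl) (fun m => rfl)
  have e3 : entropy μ (fun ω => ((u (J ω), v (J ω)), q (J ω)))
      = entropy μ (fun ω => (v (J ω), (q (J ω), u (J ω)))) :=
    entropy_congr μ J hJ (fun m => ((u m, v m), q m)) (fun m => (v m, (q m, u m)))
      (fun x => ((x.2.2, x.1), x.2.1)) (fun x => (x.1.2, (x.2, x.1.1)))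
      (fun m => rfl) (fun m => rfl)
  have e4 : entropy μ (fun ω => ((y (J ω), (u (J ω), v (J ω))), q (J ω)))
      = entropy μ (fun ω => ((y (J ω), v (J ω)), (q (J ω), u (J ω)))) :=
    entropy_congr μ J hJ (fun m => ((y m, (u m, v m)), q m))
      (fun m => ((y m, v m), (q m, u m)))
      (fun x => ((x.1.1, (x.2.2, x.1.2)), x.2.1)) (fun x => ((x.1.1, x.1.2.2), (x.2, x.1.2.1)))
      (fun m => rfl) (fun m => rfl)
  simp only [condMutualInfo, condEntropy]
  linarith [e1, e2, e3, e4]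

lemma cmi_eq {DY DV DW : Type*} [Fintype DY] [Fintype DV] [Fintype DW]
    (hJ : ∀ m, MeasurableSet (J ⁻¹' {m})) (y : M → DY) (v : M → DV) (w : M → DW) :
    condMutualInfo μ (fun ω => y (J ω)) (fun ω => v (J ω)) (fun ω => w (J ω))
      = condEntropy μ (fun ω => v (J ω)) (fun ω => w (J ω))
        - condEntropy μ (fun ω => v (J ω)) (fun ω => (y (J ω), w (J ω))) := by
  have e1 : entropy μ (fun ω => ((y (J ω), v (J ω)), w (J ω)))
      = entropy μ (fun ω => (v (J ω), (y (J ω), w (J ω)))) :=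
    entropy_congr μ J hJ (fun m => ((y m, v m), w m)) (fun m => (v m, (y m, w m)))
      (fun x => ((x.2.1, x.1), x.2.2)) (fun x => (x.1.2, (x.1.1, x.2)))
      (fun m => rfl) (fun m => rfl)
  simp only [condMutualInfo, condEntropy]
  linarith [e1]

lemma cmi_congr_snd {DY DV DV' DW : Type*} [Fintype DY] [Fintype DV] [Fintype DV'] [Fintype DW]
    (hJ : ∀ m, MeasurableSet (J ⁻¹' {m})) (y : M → DY) (v : M → DV) (v' : M → DV') (w : M → DW)
    (σ : DV' → DV) (τ : DV → DV') (h1 : ∀ m, σ (v' m) = v m) (h2 : ∀ m, τ (v m) = v' m) :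
    condMutualInfo μ (fun ω => y (J ω)) (fun ω => v (J ω)) (fun ω => w (J ω))
      = condMutualInfo μ (fun ω => y (J ω)) (fun ω => v' (J ω)) (fun ω => w (J ω)) := by
  have e1 : entropy μ (fun ω => (v (J ω), w (J ω)))
      = entropy μ (fun ω => (v' (J ω), w (J ω))) :=
    entropy_congr μ J hJ (fun m => (v m, w m)) (fun m => (v' m, w m))
      (fun x => (σ x.1, x.2)) (fun x => (τ x.1, x.2))
      (fun m => by simp [h1]) (fun m => by simp [h2])
  have e2 : entropy μ (fun ω => ((y (J ω), v (J ω)), w (J ω)))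
      = entropy μ (fun ω => ((y (J ω), v' (J ω)), w (J ω))) :=
    entropy_congr μ J hJ (fun m => ((y m, v m), w m)) (fun m => ((y m, v' m), w m))
      (fun x => ((x.1.1, σ x.1.2), x.2)) (fun x => ((x.1.1, τ x.1.2), x.2))
      (fun m => by simp [h1]) (fun m => by simp [h2])
  simp only [condMutualInfo, condEntropy]
  linarith [e1, e2]

end Info

/-- If `A, Q, X, Y` are finite-valued random variables, `Z = f(X)`,
`H(A | (Q, X)) = 0` and `I(Y ; X | Q) = 0`, then `I(Y ; A | (Q, Z)) = 0`. -/
theorem stmt_7 {Ω : Type*} [MeasurableSpace Ω] (μ : Measure Ω) [IsProbabilityMeasure μ]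
    {α β γ δ ε : Type*} [Fintype α] [Fintype β] [Fintype γ] [Fintype δ] [Fintype ε]
    [MeasurableSpace α] [MeasurableSingletonClass α]
    [MeasurableSpace β] [MeasurableSingletonClass β]
    [MeasurableSpace γ] [MeasurableSingletonClass γ]
    [MeasurableSpace δ] [MeasurableSingletonClass δ]
    [MeasurableSpace ε] [MeasurableSingletonClass ε]
    (A : Ω → α) (Q : Ω → β) (X : Ω → γ) (Y : Ω → δ) (f : γ → ε)
    (hA : Measurable A) (hQ : Measurable Q) (hX : Measurable X) (hY : Measurable Y)
    (h1 : condEntropy μ A (fun ω => (Q ω, X ω)) = 0)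
    (h2 : condMutualInfo μ Y X Q = 0) :
    condMutualInfo μ Y A (fun ω => (Q ω, f (X ω))) = 0 := by
  classical
  set J0 : Ω → α × β × γ × δ := fun ω => (A ω, Q ω, X ω, Y ω) with hJ0def
  have hM : Measurable J0 := hA.prodMk (hQ.prodMk (hX.prodMk hY))
  have hJ0 : ∀ m, MeasurableSet (J0 ⁻¹' {m}) := fun m => hM (measurableSet_singleton m)
  -- selectors
  set a0 : α × β × γ × δ → α := fun m => m.1 with ha0
  set q0 : α × β × γ × δ → β := fun m => m.2.1 with hq0
  set x0 : α × β × γ × δ → γ := fun m => m.2.2.1 with hx0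
  set y0 : α × β × γ × δ → δ := fun m => m.2.2.2 with hy0
  -- chain rule: I(Y;(X,A)|Q) = I(Y;X|Q) + I(Y;A|(Q,X))
  have E1 : condMutualInfo μ Y (fun ω => (X ω, A ω)) Q
      = condMutualInfo μ Y X Q + condMutualInfo μ Y A (fun ω => (Q ω, X ω)) :=
    chain_rule μ J0 hJ0 y0 x0 a0 q0
  have E2 : condMutualInfo μ Y A (fun ω => (Q ω, X ω))
      = condEntropy μ A (fun ω => (Q ω, X ω))
        - condEntropy μ A (fun ω => (Y ω, (Q ω, X ω))) :=
    cmi_eq μ J0 hJ0 y0 a0 (fun m => (q0 m, x0 m))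
  have E3 : 0 ≤ condEntropy μ A (fun ω => (Y ω, (Q ω, X ω))) :=
    condEntropy_nonneg μ J0 hJ0 a0 (fun m => (y0 m, (q0 m, x0 m)))
  have E4 : 0 ≤ condMutualInfo μ Y A (fun ω => (Q ω, X ω)) :=
    cmi_nonneg μ J0 hJ0 y0 a0 (fun m => (q0 m, x0 m))
  -- chain rule: I(Y;((X,A),(Z,A))|Q) = I(Y;(X,A)|Q) + I(Y;(Z,A)|(Q,(X,A)))
  have E5 : condMutualInfo μ Y (fun ω => ((X ω, A ω), (f (X ω), A ω))) Q
      = condMutualInfo μ Y (fun ω => (X ω, A ω)) Q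
        + condMutualInfo μ Y (fun ω => (f (X ω), A ω)) (fun ω => (Q ω, (X ω, A ω))) :=
    chain_rule μ J0 hJ0 y0 (fun m => (x0 m, a0 m)) (fun m => (f (x0 m), a0 m)) q0
  have E6 : condMutualInfo μ Y (fun ω => (f (X ω), A ω)) (fun ω => (Q ω, (X ω, A ω)))
      = condEntropy μ (fun ω => (f (X ω), A ω)) (fun ω => (Q ω, (X ω, A ω)))
        - condEntropy μ (fun ω => (f (X ω), A ω)) (fun ω => (Y ω, (Q ω, (X ω, A ω)))) :=
    cmi_eq μ J0 hJ0 y0 (fun m => (f (x0 m), a0 m)) (fun m => (q0 m, (x0 m, a0 m)))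
  have E7 : condEntropy μ (fun ω => (f (X ω), A ω)) (fun ω => (Q ω, (X ω, A ω))) = 0 :=
    cond_det μ J0 hJ0 (fun m => (q0 m, (x0 m, a0 m))) (fun p => (f p.2.1, p.2.2))
  have E8 : condEntropy μ (fun ω => (f (X ω), A ω))
      (fun ω => (Y ω, (Q ω, (X ω, A ω)))) = 0 :=
    cond_det μ J0 hJ0 (fun m => (y0 m, (q0 m, (x0 m, a0 m)))) (fun p => (f p.2.2.1, p.2.2.2))
  -- chain rule: I(Y;((Z,A),(X,A))|Q) = I(Y;(Z,A)|Q) + I(Y;(X,A)|(Q,(Z,A)))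
  have E9 : condMutualInfo μ Y (fun ω => ((f (X ω), A ω), (X ω, A ω))) Q
      = condMutualInfo μ Y (fun ω => (f (X ω), A ω)) Q
        + condMutualInfo μ Y (fun ω => (X ω, A ω)) (fun ω => (Q ω, (f (X ω), A ω))) :=
    chain_rule μ J0 hJ0 y0 (fun m => (f (x0 m), a0 m)) (fun m => (x0 m, a0 m)) q0
  have E10 : 0 ≤ condMutualInfo μ Y (fun ω => (X ω, A ω))
      (fun ω => (Q ω, (f (X ω), A ω))) :=
    cmi_nonneg μ J0 hJ0 y0 (fun m => (x0 m, a0 m)) (fun m => (q0 m, (f (x0 m), a0 m)))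
  have E11 : condMutualInfo μ Y (fun ω => ((f (X ω), A ω), (X ω, A ω))) Q
      = condMutualInfo μ Y (fun ω => ((X ω, A ω), (f (X ω), A ω))) Q :=
    cmi_congr_snd μ J0 hJ0 y0 (fun m => ((f (x0 m), a0 m), (x0 m, a0 m)))
      (fun m => ((x0 m, a0 m), (f (x0 m), a0 m))) q0
      Prod.swap Prod.swap (fun m => rfl) (fun m => rfl)
  -- chain rule: I(Y;(Z,A)|Q) = I(Y;Z|Q) + I(Y;A|(Q,Z))
  have E12 : condMutualInfo μ Y (fun ω => (f (X ω), A ω)) Q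
      = condMutualInfo μ Y (fun ω => f (X ω)) Q
        + condMutualInfo μ Y A (fun ω => (Q ω, f (X ω))) :=
    chain_rule μ J0 hJ0 y0 (fun m => f (x0 m)) a0 q0
  have E13 : 0 ≤ condMutualInfo μ Y (fun ω => f (X ω)) Q :=
    cmi_nonneg μ J0 hJ0 y0 (fun m => f (x0 m)) q0
  have E14 : 0 ≤ condMutualInfo μ Y A (fun ω => (Q ω, f (X ω))) :=
    cmi_nonneg μ J0 hJ0 y0 a0 (fun m => (q0 m, f (x0 m)))
  linarith [E1, E2, E3, E4, E5, E6, E7, E8, E9, E10, E11, E12, E13, E14, h1, h2]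
end

section
/- Let A, Q, X, Y be random variables on a common probability space, each taking finitely many values, and let Z = f(X) for some function f of the values of X. Then I(Y ; A | ⟨Q, Z⟩) ≤ I(Y ; X | Q) + H(A | ⟨Q, X⟩). -/
open MeasureTheory

section aux

open Finset

variable {Ω : Type*} [MeasurableSpace Ω] {μ : Measure Ω}

lemma preimage_comp_toReal [IsProbabilityMeasure μ] {S T : Type*} [Fintype S] [MeasurableSpace S]
    [MeasurableSingletonClass S] [DecidableEq T]
    (R : Ω → S) (hR : Measurable R) (π : S → T) (t : T) :
    (μ ((fun ω => π (R ω)) ⁻¹' {t})).toReal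
      = ∑ s ∈ univ.filter (fun s => π s = t), (μ (R ⁻¹' {s})).toReal := by
  have h1 : ((fun ω => π (R ω)) ⁻¹' {t})
      = ⋃ s ∈ univ.filter (fun s => π s = t), R ⁻¹' {s} := by
    ext ω
    simp [eq_comm]
  rw [h1, measure_biUnion_finset ((Set.pairwiseDisjoint_fiber R _).subset (Set.subset_univ _))
      (fun s _ => hR (measurableSet_singleton s)),
    ENNReal.toReal_sum (fun s _ => measure_ne_top μ _)]

lemma entropy_comp [IsProbabilityMeasure μ] {S T : Type*} [Fintype S] [Fintype T]
    [MeasurableSpace S] [MeasurableSingletonClass S] (R : Ω → S) (hR : Measurable R) (π : S → T) :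
    entropy μ (fun ω => π (R ω))
      = -∑ s : S, (μ (R ⁻¹' {s})).toReal
          * Real.log (μ ((fun ω => π (R ω)) ⁻¹' {π s})).toReal := by
  classical
  unfold entropy
  congr 1
  rw [← Finset.sum_fiberwise univ π
    (fun s => (μ (R ⁻¹' {s})).toReal * Real.log (μ ((fun ω => π (R ω)) ⁻¹' {π s})).toReal)]
  refine Finset.sum_congr rfl fun t _ => ?_
  have h2 : ∑ s ∈ univ.filter (fun s => π s = t),
      (μ (R ⁻¹' {s})).toReal * Real.log (μ ((fun ω => π (R ω)) ⁻¹' {π s})).toReal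
      = (∑ s ∈ univ.filter (fun s => π s = t), (μ (R ⁻¹' {s})).toReal)
          * Real.log (μ ((fun ω => π (R ω)) ⁻¹' {t})).toReal := by
    rw [Finset.sum_mul]
    exact Finset.sum_congr rfl fun s hs => by rw [(mem_filter.1 hs).2]
  rw [h2, ← preimage_comp_toReal R hR π t]

lemma entropy_comp_inj [IsProbabilityMeasure μ] {S T : Type*} [Fintype S] [Fintype T]
    [MeasurableSpace S] [MeasurableSingletonClass S] (R : Ω → S) (hR : Measurable R) (π : S → T)
    (hπ : Function.Injective π) :
    entropy μ (fun ω => π (R ω)) = entropy μ R := by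
  rw [entropy_comp R hR π]
  unfold entropy
  congr 1
  refine Finset.sum_congr rfl fun s _ => ?_
  have h : (fun ω => π (R ω)) ⁻¹' {π s} = R ⁻¹' {s} := by
    ext ω; simp [hπ.eq_iff]
  rw [h]

lemma sum_p_eq_one [IsProbabilityMeasure μ] {S : Type*} [Fintype S] [MeasurableSpace S]
    [MeasurableSingletonClass S] (R : Ω → S) (hR : Measurable R) :
    ∑ s : S, (μ (R ⁻¹' {s})).toReal = 1 := by
  have h : ∑ s : S, μ (R ⁻¹' {s}) = 1 := by
    rw [sum_measure_preimage_singleton _ (fun s _ => hR (measurableSet_singleton s))]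
    simp
  rw [← ENNReal.toReal_sum (fun s _ => measure_ne_top μ _), h, ENNReal.toReal_one]

lemma sum_preimage_pair [IsProbabilityMeasure μ] {S T : Type*} [Fintype S] [Fintype T]
    [MeasurableSpace S] [MeasurableSingletonClass S] [MeasurableSpace T]
    [MeasurableSingletonClass T]
    (W : Ω → S) (V : Ω → T) (hW : Measurable W) (hV : Measurable V) (t : T) :
    ∑ s : S, (μ ((fun ω => (W ω, V ω)) ⁻¹' {(s, t)})).toReal = (μ (V ⁻¹' {t})).toReal := by
  classical
  have h := preimage_comp_toReal (μ := μ) (fun ω => (W ω, V ω)) (hW.prodMk hV) Prod.snd t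
  have himg : univ.filter (fun p : S × T => p.2 = t) = univ.image (fun s => (s, t)) := by
    ext ⟨a, b⟩
    simp [Prod.ext_iff, eq_comm]
  rw [himg, Finset.sum_image (fun a _ b _ hab => by simpa using hab)] at h
  exact h.symm


lemma condEntropy_nonneg' [IsProbabilityMeasure μ] {S T : Type*} [Fintype S] [Fintype T]
    [MeasurableSpace S] [MeasurableSingletonClass S] [MeasurableSpace T]
    [MeasurableSingletonClass T]
    (U : Ω → S) (V : Ω → T) (hU : Measurable U) (hV : Measurable V) :
    0 ≤ condEntropy μ U V := by
  classical
  have hR : Measurable (fun ω => (U ω, V ω)) := hU.prodMk hV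
  have h2 : entropy μ V
      = -∑ s : S × T, (μ ((fun ω => (U ω, V ω)) ⁻¹' {s})).toReal
          * Real.log (μ (V ⁻¹' {s.2})).toReal :=
    entropy_comp (fun ω => (U ω, V ω)) hR Prod.snd
  rw [condEntropy, h2, entropy, neg_sub_neg, ← Finset.sum_sub_distrib]
  refine Finset.sum_nonneg fun s _ => ?_
  rw [sub_nonneg]
  rcases eq_or_lt_of_le (ENNReal.toReal_nonneg :
      (0:ℝ) ≤ (μ ((fun ω => (U ω, V ω)) ⁻¹' {s})).toReal) with h0 | h0
  · rw [← h0]; simp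
  · have hsub : (fun ω => (U ω, V ω)) ⁻¹' {s} ⊆ V ⁻¹' {s.2} := by
      intro ω hω
      simp only [Set.mem_preimage, Set.mem_singleton_iff] at hω ⊢
      rw [← hω]
    have hle := ENNReal.toReal_mono (measure_ne_top μ _) (measure_mono hsub)
    exact mul_le_mul_of_nonneg_left (Real.log_le_log h0 hle) h0.le


lemma jensen_core {S T U : Type*} [Fintype S] [Fintype T] [Fintype U]
    (p : S × T × U → ℝ) (a : S × U → ℝ) (b : T × U → ℝ) (c : U → ℝ)
    (hp0 : ∀ v, 0 ≤ p v)
    (ha0 : ∀ w, 0 ≤ a w) (hb0 : ∀ w, 0 ≤ b w) (hc0 : ∀ u, 0 ≤ c u)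
    (hpa : ∀ v : S × T × U, p v ≤ a (v.1, v.2.2))
    (hpb : ∀ v : S × T × U, p v ≤ b (v.2.1, v.2.2))
    (hpc : ∀ v : S × T × U, p v ≤ c v.2.2)
    (hsum : ∑ v, p v = 1) (hcsum : ∑ u, c u = 1)
    (hac : ∀ u, ∑ s, a (s, u) = c u) (hbc : ∀ u, ∑ t, b (t, u) = c u) :
    0 ≤ (-∑ v, p v * Real.log (a (v.1, v.2.2))) + (-∑ v, p v * Real.log (b (v.2.1, v.2.2)))
        - (-∑ v, p v * Real.log (p v)) - (-∑ v, p v * Real.log (c v.2.2)) := by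
  classical
  set supp : Finset (S × T × U) := univ.filter (fun v => p v ≠ 0) with hsupp
  have hmem : ∀ v ∈ supp, p v ≠ 0 := fun v hv => (mem_filter.1 hv).2
  have hpos : ∀ v ∈ supp, 0 < p v := fun v hv => lt_of_le_of_ne (hp0 v) (Ne.symm (hmem v hv))
  -- restrict sums to the support
  have hres : ∀ g : S × T × U → ℝ, ∑ v ∈ supp, p v * g v = ∑ v, p v * g v := by
    intro g
    exact Finset.sum_filter_of_ne fun v _ h hp => h (by rw [hp, zero_mul])
  have hA := hres fun v => Real.log (a (v.1, v.2.2))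
  have hB := hres fun v => Real.log (b (v.2.1, v.2.2))
  have hP := hres fun v => Real.log (p v)
  have hC := hres fun v => Real.log (c v.2.2)
  -- support sums to 1
  have hsupp1 : ∑ v ∈ supp, p v = 1 := by
    rw [hsupp, Finset.sum_filter_of_ne fun v _ h => h, hsum]
  -- merge logs on the support
  have hkey : ∀ v ∈ supp,
      p v * Real.log (a (v.1, v.2.2)) + p v * Real.log (b (v.2.1, v.2.2))
        - p v * Real.log (p v) - p v * Real.log (c v.2.2)
      = p v * Real.log (a (v.1, v.2.2) * b (v.2.1, v.2.2) / (p v * c v.2.2)) := by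
    intro v hv
    have hpv := hpos v hv
    have hav : 0 < a (v.1, v.2.2) := lt_of_lt_of_le hpv (hpa v)
    have hbv : 0 < b (v.2.1, v.2.2) := lt_of_lt_of_le hpv (hpb v)
    have hcv : 0 < c v.2.2 := lt_of_lt_of_le hpv (hpc v)
    rw [Real.log_div (by positivity) (by positivity),
      Real.log_mul hav.ne' hbv.ne', Real.log_mul hpv.ne' hcv.ne']
    ring
  have hmerge : ∑ v ∈ supp,
      (p v * Real.log (a (v.1, v.2.2)) + p v * Real.log (b (v.2.1, v.2.2))
        - p v * Real.log (p v) - p v * Real.log (c v.2.2))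
      = ∑ v ∈ supp, p v * Real.log (a (v.1, v.2.2) * b (v.2.1, v.2.2) / (p v * c v.2.2)) :=
    Finset.sum_congr rfl hkey
  have hsplit : ∑ v ∈ supp,
      (p v * Real.log (a (v.1, v.2.2)) + p v * Real.log (b (v.2.1, v.2.2))
        - p v * Real.log (p v) - p v * Real.log (c v.2.2))
      = (∑ v ∈ supp, p v * Real.log (a (v.1, v.2.2)))
        + (∑ v ∈ supp, p v * Real.log (b (v.2.1, v.2.2)))
        - (∑ v ∈ supp, p v * Real.log (p v))
        - (∑ v ∈ supp, p v * Real.log (c v.2.2)) := by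
    rw [Finset.sum_sub_distrib, Finset.sum_sub_distrib, Finset.sum_add_distrib]
  -- Jensen
  have hjen := (strictConcaveOn_log_Ioi.concaveOn).le_map_sum
    (t := supp) (w := p) (p := fun v => a (v.1, v.2.2) * b (v.2.1, v.2.2) / (p v * c v.2.2))
    (fun v _ => hp0 v) hsupp1
    (fun v hv => by
      have hpv := hpos v hv
      have hav : 0 < a (v.1, v.2.2) := lt_of_lt_of_le hpv (hpa v)
      have hbv : 0 < b (v.2.1, v.2.2) := lt_of_lt_of_le hpv (hpb v)
      have hcv : 0 < c v.2.2 := lt_of_lt_of_le hpv (hpc v)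
      exact Set.mem_Ioi.2 (by positivity))
  simp only [smul_eq_mul] at hjen
  -- simplify the sum inside the log
  have hM : ∑ v ∈ supp, p v * (a (v.1, v.2.2) * b (v.2.1, v.2.2) / (p v * c v.2.2))
      = ∑ v ∈ supp, a (v.1, v.2.2) * b (v.2.1, v.2.2) / c v.2.2 := by
    refine Finset.sum_congr rfl fun v hv => ?_
    rw [← mul_div_assoc, mul_div_mul_left _ _ (hmem v hv)]
  -- bound M by 1
  have hMnonneg : (0:ℝ) ≤ ∑ v ∈ supp, a (v.1, v.2.2) * b (v.2.1, v.2.2) / c v.2.2 :=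
    Finset.sum_nonneg fun v _ => div_nonneg (mul_nonneg (ha0 _) (hb0 _)) (hc0 _)
  have hMle : ∑ v ∈ supp, a (v.1, v.2.2) * b (v.2.1, v.2.2) / c v.2.2 ≤ 1 := by
    have step1 : ∑ v ∈ supp, a (v.1, v.2.2) * b (v.2.1, v.2.2) / c v.2.2
        ≤ ∑ v : S × T × U, a (v.1, v.2.2) * b (v.2.1, v.2.2) / c v.2.2 :=
      Finset.sum_le_sum_of_subset_of_nonneg (Finset.filter_subset _ _)
        (fun v _ _ => div_nonneg (mul_nonneg (ha0 _) (hb0 _)) (hc0 _))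
    have e1 : ∑ v : S × T × U, a (v.1, v.2.2) * b (v.2.1, v.2.2) / c v.2.2
        = ∑ s : S, ∑ t : T, ∑ u : U, a (s, u) * b (t, u) / c u := by
      rw [Fintype.sum_prod_type]
      exact Finset.sum_congr rfl fun s _ => Fintype.sum_prod_type _
    have e2 : ∑ s : S, ∑ t : T, ∑ u : U, a (s, u) * b (t, u) / c u
        = ∑ u : U, ∑ s : S, ∑ t : T, a (s, u) * b (t, u) / c u := by
      calc ∑ s : S, ∑ t : T, ∑ u : U, a (s, u) * b (t, u) / c u
          = ∑ s : S, ∑ u : U, ∑ t : T, a (s, u) * b (t, u) / c u :=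
            Finset.sum_congr rfl fun s _ => Finset.sum_comm
        _ = ∑ u : U, ∑ s : S, ∑ t : T, a (s, u) * b (t, u) / c u := Finset.sum_comm
    have e3 : ∑ u : U, ∑ s : S, ∑ t : T, a (s, u) * b (t, u) / c u
        = ∑ u : U, c u * c u / c u := by
      refine Finset.sum_congr rfl fun u _ => ?_
      have h1 : ∑ s : S, ∑ t : T, a (s, u) * b (t, u) / c u
          = (∑ s : S, ∑ t : T, a (s, u) * b (t, u)) / c u := by
        rw [Finset.sum_div]
        exact Finset.sum_congr rfl fun s _ => (Finset.sum_div _ _ _).symm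
      rw [h1, ← Finset.sum_mul_sum, hac u, hbc u]
    have e4 : ∑ u : U, c u * c u / c u ≤ 1 := by
      rw [← hcsum]
      refine Finset.sum_le_sum fun u _ => ?_
      rcases eq_or_ne (c u) 0 with h | h
      · simp [h]
      · rw [mul_div_assoc, div_self h, mul_one]
    calc ∑ v ∈ supp, a (v.1, v.2.2) * b (v.2.1, v.2.2) / c v.2.2
        ≤ ∑ v : S × T × U, a (v.1, v.2.2) * b (v.2.1, v.2.2) / c v.2.2 := step1
      _ = ∑ u : U, c u * c u / c u := by rw [e1, e2, e3]
      _ ≤ 1 := e4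
  -- finish
  have hfinal : ∑ v ∈ supp, p v * Real.log (a (v.1, v.2.2) * b (v.2.1, v.2.2) / (p v * c v.2.2)) ≤ 0 := by
    calc ∑ v ∈ supp, p v * Real.log (a (v.1, v.2.2) * b (v.2.1, v.2.2) / (p v * c v.2.2))
        ≤ Real.log (∑ v ∈ supp, p v * (a (v.1, v.2.2) * b (v.2.1, v.2.2) / (p v * c v.2.2))) := hjen
      _ = Real.log (∑ v ∈ supp, a (v.1, v.2.2) * b (v.2.1, v.2.2) / c v.2.2) := by rw [hM]
      _ ≤ 0 := Real.log_nonpos hMnonneg hMle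
  linarith [hA, hB, hP, hC, hsplit, hmerge, hfinal]


lemma condMutualInfo_nonneg' [IsProbabilityMeasure μ] {S T U : Type*} [Fintype S] [Fintype T]
    [Fintype U] [MeasurableSpace S] [MeasurableSingletonClass S] [MeasurableSpace T]
    [MeasurableSingletonClass T] [MeasurableSpace U] [MeasurableSingletonClass U]
    (X : Ω → S) (Y : Ω → T) (Z : Ω → U)
    (hX : Measurable X) (hY : Measurable Y) (hZ : Measurable Z) :
    0 ≤ condMutualInfo μ X Y Z := by
  classical
  have hR : Measurable (fun ω => (X ω, Y ω, Z ω)) := hX.prodMk (hY.prodMk hZ)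
  have eXZ : entropy μ (fun ω => (X ω, Z ω))
      = -∑ v : S × T × U, (μ ((fun ω => (X ω, Y ω, Z ω)) ⁻¹' {v})).toReal
          * Real.log (μ ((fun ω => (X ω, Z ω)) ⁻¹' {(v.1, v.2.2)})).toReal :=
    entropy_comp (fun ω => (X ω, Y ω, Z ω)) hR (fun v => (v.1, v.2.2))
  have eYZ : entropy μ (fun ω => (Y ω, Z ω))
      = -∑ v : S × T × U, (μ ((fun ω => (X ω, Y ω, Z ω)) ⁻¹' {v})).toReal
          * Real.log (μ ((fun ω => (Y ω, Z ω)) ⁻¹' {(v.2.1, v.2.2)})).toReal :=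
    entropy_comp (fun ω => (X ω, Y ω, Z ω)) hR (fun v => (v.2.1, v.2.2))
  have eZ : entropy μ Z
      = -∑ v : S × T × U, (μ ((fun ω => (X ω, Y ω, Z ω)) ⁻¹' {v})).toReal
          * Real.log (μ (Z ⁻¹' {v.2.2})).toReal :=
    entropy_comp (fun ω => (X ω, Y ω, Z ω)) hR (fun v => v.2.2)
  have eXY_Z : entropy μ (fun ω => ((X ω, Y ω), Z ω))
      = entropy μ (fun ω => (X ω, Y ω, Z ω)) :=
    entropy_comp_inj (fun ω => (X ω, Y ω, Z ω)) hR (fun v => ((v.1, v.2.1), v.2.2))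
      (fun v w h => by
        simp only [Prod.mk.injEq] at h
        exact Prod.ext h.1.1 (Prod.ext h.1.2 h.2))
  have eR : entropy μ (fun ω => (X ω, Y ω, Z ω))
      = -∑ v : S × T × U, (μ ((fun ω => (X ω, Y ω, Z ω)) ⁻¹' {v})).toReal
          * Real.log (μ ((fun ω => (X ω, Y ω, Z ω)) ⁻¹' {v})).toReal := rfl
  have key := jensen_core
    (fun v : S × T × U => (μ ((fun ω => (X ω, Y ω, Z ω)) ⁻¹' {v})).toReal)
    (fun w : S × U => (μ ((fun ω => (X ω, Z ω)) ⁻¹' {w})).toReal)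
    (fun w : T × U => (μ ((fun ω => (Y ω, Z ω)) ⁻¹' {w})).toReal)
    (fun u : U => (μ (Z ⁻¹' {u})).toReal)
    (fun v => ENNReal.toReal_nonneg) (fun w => ENNReal.toReal_nonneg)
    (fun w => ENNReal.toReal_nonneg) (fun u => ENNReal.toReal_nonneg)
    (fun v => ENNReal.toReal_mono (measure_ne_top μ _) (measure_mono (by
      intro ω hω
      simp only [Set.mem_preimage, Set.mem_singleton_iff] at hω ⊢
      rw [← hω])))
    (fun v => ENNReal.toReal_mono (measure_ne_top μ _) (measure_mono (by
      intro ω hω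
      simp only [Set.mem_preimage, Set.mem_singleton_iff] at hω ⊢
      rw [← hω])))
    (fun v => ENNReal.toReal_mono (measure_ne_top μ _) (measure_mono (by
      intro ω hω
      simp only [Set.mem_preimage, Set.mem_singleton_iff] at hω ⊢
      rw [← hω])))
    (sum_p_eq_one (fun ω => (X ω, Y ω, Z ω)) hR)
    (sum_p_eq_one Z hZ)
    (fun u => sum_preimage_pair X Z hX hZ u)
    (fun u => sum_preimage_pair Y Z hY hZ u)
  have key' : 0 ≤
      (-∑ v : S × T × U, (μ ((fun ω => (X ω, Y ω, Z ω)) ⁻¹' {v})).toReal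
          * Real.log (μ ((fun ω => (X ω, Z ω)) ⁻¹' {(v.1, v.2.2)})).toReal)
      + (-∑ v : S × T × U, (μ ((fun ω => (X ω, Y ω, Z ω)) ⁻¹' {v})).toReal
          * Real.log (μ ((fun ω => (Y ω, Z ω)) ⁻¹' {(v.2.1, v.2.2)})).toReal)
      - (-∑ v : S × T × U, (μ ((fun ω => (X ω, Y ω, Z ω)) ⁻¹' {v})).toReal
          * Real.log (μ ((fun ω => (X ω, Y ω, Z ω)) ⁻¹' {v})).toReal)
      - (-∑ v : S × T × U, (μ ((fun ω => (X ω, Y ω, Z ω)) ⁻¹' {v})).toReal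
          * Real.log (μ (Z ⁻¹' {v.2.2})).toReal) := key
  simp only [condMutualInfo, condEntropy] at *
  linarith [key', eXZ, eYZ, eZ, eXY_Z, eR]

end aux

/-- If `A, Q, X, Y` are finite-valued random variables and `Z = f(X)`, then
`I(Y ; A | (Q, Z)) ≤ I(Y ; X | Q) + H(A | (Q, X))`. -/
theorem stmt_8 {Ω : Type*} [MeasurableSpace Ω] (μ : Measure Ω) [IsProbabilityMeasure μ]
    {α β γ δ ε : Type*} [Fintype α] [Fintype β] [Fintype γ] [Fintype δ] [Fintype ε]
    [MeasurableSpace α] [MeasurableSingletonClass α]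
    [MeasurableSpace β] [MeasurableSingletonClass β]
    [MeasurableSpace γ] [MeasurableSingletonClass γ]
    [MeasurableSpace δ] [MeasurableSingletonClass δ]
    [MeasurableSpace ε] [MeasurableSingletonClass ε]
    (A : Ω → α) (Q : Ω → β) (X : Ω → γ) (Y : Ω → δ) (f : γ → ε)
    (hA : Measurable A) (hQ : Measurable Q) (hX : Measurable X) (hY : Measurable Y) :
    condMutualInfo μ Y A (fun ω => (Q ω, f (X ω)))
      ≤ condMutualInfo μ Y X Q + condEntropy μ A (fun ω => (Q ω, X ω)) := by
  have hfX : Measurable (fun ω => f (X ω)) := (measurable_of_countable f).comp hX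
  have hT1 : 0 ≤ condMutualInfo μ Y (fun ω => f (X ω)) Q :=
    condMutualInfo_nonneg' Y (fun ω => f (X ω)) Q hY hfX hQ
  have hT2 : 0 ≤ condMutualInfo μ Y X (fun ω => (A ω, Q ω, f (X ω))) :=
    condMutualInfo_nonneg' Y X _ hY hX (hA.prodMk (hQ.prodMk hfX))
  have hT3 : 0 ≤ condEntropy μ A (fun ω => (Y ω, X ω, Q ω)) :=
    condEntropy_nonneg' A _ hA (hY.prodMk (hX.prodMk hQ))
  have e1 : entropy μ (fun ω => ((Y ω, A ω), (Q ω, f (X ω))))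
      = entropy μ (fun ω => (Y ω, A ω, Q ω, f (X ω))) :=
    entropy_comp_inj (fun ω => (Y ω, A ω, Q ω, f (X ω)))
      (hY.prodMk (hA.prodMk (hQ.prodMk hfX)))
      (fun v => ((v.1, v.2.1), v.2.2))
      (fun ⟨y, a, q, z⟩ ⟨y', a', q', z'⟩ h => by simp_all [Prod.mk.injEq])
  have e2 : entropy μ (fun ω => ((Y ω, X ω), Q ω))
      = entropy μ (fun ω => (Y ω, X ω, Q ω)) :=
    entropy_comp_inj (fun ω => (Y ω, X ω, Q ω))
      (hY.prodMk (hX.prodMk hQ))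
      (fun v => ((v.1, v.2.1), v.2.2))
      (fun ⟨y, x, q⟩ ⟨y', x', q'⟩ h => by simp_all [Prod.mk.injEq])
  have e3 : entropy μ (fun ω => (Q ω, X ω)) = entropy μ (fun ω => (X ω, Q ω)) :=
    entropy_comp_inj (fun ω => (X ω, Q ω)) (hX.prodMk hQ) Prod.swap Prod.swap_injective
  have e4a : entropy μ (fun ω => (f (X ω), Q ω)) = entropy μ (fun ω => (Q ω, f (X ω))) :=
    entropy_comp_inj (fun ω => (Q ω, f (X ω))) (hQ.prodMk hfX) Prod.swap Prod.swap_injective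
  have e4b : entropy μ (fun ω => ((Y ω, f (X ω)), Q ω))
      = entropy μ (fun ω => (Y ω, Q ω, f (X ω))) :=
    entropy_comp_inj (fun ω => (Y ω, Q ω, f (X ω)))
      (hY.prodMk (hQ.prodMk hfX))
      (fun v => ((v.1, v.2.2), v.2.1))
      (fun ⟨y, q, z⟩ ⟨y', q', z'⟩ h => by simp_all [Prod.mk.injEq])
  have e5 : entropy μ (fun ω => (X ω, A ω, Q ω, f (X ω)))
      = entropy μ (fun ω => (A ω, Q ω, X ω)) :=
    entropy_comp_inj (fun ω => (A ω, Q ω, X ω))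
      (hA.prodMk (hQ.prodMk hX))
      (fun v => (v.2.2, v.1, v.2.1, f v.2.2))
      (fun ⟨a, q, x⟩ ⟨a', q', x'⟩ h => by simp_all [Prod.mk.injEq])
  have e6 : entropy μ (fun ω => ((Y ω, X ω), A ω, Q ω, f (X ω)))
      = entropy μ (fun ω => (Y ω, A ω, Q ω, X ω)) :=
    entropy_comp_inj (fun ω => (Y ω, A ω, Q ω, X ω))
      (hY.prodMk (hA.prodMk (hQ.prodMk hX)))
      (fun v => ((v.1, v.2.2.2), v.2.1, v.2.2.1, f v.2.2.2))
      (fun ⟨y, a, q, x⟩ ⟨y', a', q', x'⟩ h => by simp_all [Prod.mk.injEq])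
  have e7 : entropy μ (fun ω => (A ω, Y ω, X ω, Q ω))
      = entropy μ (fun ω => (Y ω, A ω, Q ω, X ω)) :=
    entropy_comp_inj (fun ω => (Y ω, A ω, Q ω, X ω))
      (hY.prodMk (hA.prodMk (hQ.prodMk hX)))
      (fun v => (v.2.1, v.1, v.2.2.2, v.2.2.1))
      (fun ⟨y, a, q, x⟩ ⟨y', a', q', x'⟩ h => by simp_all [Prod.mk.injEq])
  simp only [condMutualInfo, condEntropy] at hT1 hT2 hT3 ⊢
  linarith [e1, e2, e3, e4a, e4b, e5, e6, e7, hT1, hT2, hT3]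
end

section
/- Let A, Q, X, Y be random variables on a common probability space, each taking finitely many values, and let Q' = g(Q) for some function g of the values of Q. If H(A | ⟨X, Q'⟩) = 0 and I(⟨X, Y⟩ ; Q) = 0, then H(A | ⟨Y, Q'⟩) = H(A | ⟨Y, Q⟩). -/
open Finset Real
namespace S9
open scoped Classical


lemma negMulLog_add_le {x y : ℝ} (hx : 0 ≤ x) (hy : 0 ≤ y) :
    Real.negMulLog (x + y) ≤ Real.negMulLog x + Real.negMulLog y := by
  rcases eq_or_lt_of_le hx with h | hx'
  · simp [← h]
  rcases eq_or_lt_of_le hy with h | hy'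
  · simp [← h]
  have h1 : Real.log x ≤ Real.log (x + y) := Real.log_le_log hx' (by linarith)
  have h2 : Real.log y ≤ Real.log (x + y) := Real.log_le_log hy' (by linarith)
  simp only [Real.negMulLog, neg_mul]
  nlinarith

lemma negMulLog_sum_le {ι : Type*} (s : Finset ι) (f : ι → ℝ) (hf : ∀ i ∈ s, 0 ≤ f i) :
    Real.negMulLog (∑ i ∈ s, f i) ≤ ∑ i ∈ s, Real.negMulLog (f i) := by
  induction s using Finset.cons_induction with
  | empty => simp
  | cons i s hi ih =>
    rw [Finset.sum_cons, Finset.sum_cons]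
    calc Real.negMulLog (f i + ∑ j ∈ s, f j)
        ≤ Real.negMulLog (f i) + Real.negMulLog (∑ j ∈ s, f j) :=
          negMulLog_add_le (hf i (Finset.mem_cons_self i s))
            (Finset.sum_nonneg fun j hj => hf j (Finset.mem_cons_of_mem hj))
      _ ≤ _ := by
          have := ih fun j hj => hf j (Finset.mem_cons_of_mem hj)
          linarith

/-- pointwise Gibbs step -/
lemma point {a b c d : ℝ} (ha : 0 ≤ a) (hab : a ≤ b) (hac : a ≤ c) (had : a ≤ d)
    (hb : 0 ≤ b) (hc : 0 ≤ c) (hd : 0 ≤ d) :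
    a - b * c / d ≤ a * Real.log a + a * Real.log d - a * Real.log b - a * Real.log c := by
  rcases eq_or_lt_of_le ha with h | ha'
  · subst h
    have : 0 ≤ b * c / d := div_nonneg (mul_nonneg hb hc) hd
    simp only [zero_mul, zero_sub, sub_zero, add_zero, zero_add]
    linarith
  have hb' : 0 < b := lt_of_lt_of_le ha' hab
  have hc' : 0 < c := lt_of_lt_of_le ha' hac
  have hd' : 0 < d := lt_of_lt_of_le ha' had
  have hpos : 0 < b * c / (a * d) := by positivity
  have hlog := Real.log_le_sub_one_of_pos hpos
  have hexp : Real.log (b * c / (a * d)) =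
      Real.log b + Real.log c - Real.log a - Real.log d := by
    rw [Real.log_div (by positivity) (by positivity), Real.log_mul hb'.ne' hc'.ne',
      Real.log_mul ha'.ne' hd'.ne']
    ring
  rw [hexp] at hlog
  have hmul := mul_le_mul_of_nonneg_left hlog ha
  have hval : a * (b * c / (a * d) - 1) = b * c / d - a := by
    field_simp
  rw [hval] at hmul
  nlinarith


lemma core {R S U : Type*} [Fintype R] [Fintype S] [Fintype U]
    (a : R → S → U → ℝ) (ha : ∀ r s u, 0 ≤ a r s u) :
    (∑ r, ∑ s, ∑ u, Real.negMulLog (a r s u)) + ∑ u, Real.negMulLog (∑ r, ∑ s, a r s u) ≤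
    (∑ r, ∑ u, Real.negMulLog (∑ s, a r s u)) +
      ∑ s, ∑ u, Real.negMulLog (∑ r, a r s u) := by
  set b : R → U → ℝ := fun r u => ∑ s, a r s u with hbdef
  set c : S → U → ℝ := fun s u => ∑ r, a r s u with hcdef
  set d : U → ℝ := fun u => ∑ r, ∑ s, a r s u with hddef
  have hb : ∀ r u, 0 ≤ b r u := fun r u => Finset.sum_nonneg fun s _ => ha r s u
  have hc : ∀ s u, 0 ≤ c s u := fun s u => Finset.sum_nonneg fun r _ => ha r s u
  have hd : ∀ u, 0 ≤ d u := fun u =>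
    Finset.sum_nonneg fun r _ => Finset.sum_nonneg fun s _ => ha r s u
  have hab : ∀ r s u, a r s u ≤ b r u := fun r s u =>
    Finset.single_le_sum (fun s' _ => ha r s' u) (Finset.mem_univ s)
  have hac : ∀ r s u, a r s u ≤ c s u := fun r s u =>
    Finset.single_le_sum (fun r' _ => ha r' s u) (Finset.mem_univ r)
  have had : ∀ r s u, a r s u ≤ d u := fun r s u =>
    le_trans (hab r s u) (Finset.single_le_sum (fun r' _ => hb r' u) (Finset.mem_univ r))
  have key : ∀ r s u, a r s u - b r u * c s u / d u ≤
      a r s u * Real.log (a r s u) + a r s u * Real.log (d u)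
        - a r s u * Real.log (b r u) - a r s u * Real.log (c s u) := fun r s u =>
    point (ha r s u) (hab r s u) (hac r s u) (had r s u) (hb r u) (hc s u) (hd u)
  have hsum : (∑ r, ∑ s, ∑ u, (a r s u - b r u * c s u / d u)) ≤
      ∑ r, ∑ s, ∑ u, (a r s u * Real.log (a r s u) + a r s u * Real.log (d u)
        - a r s u * Real.log (b r u) - a r s u * Real.log (c s u)) := by
    refine Finset.sum_le_sum fun r _ => Finset.sum_le_sum fun s _ =>
      Finset.sum_le_sum fun u _ => key r s u
  -- identities
  have hcd : ∀ u, ∑ s, c s u = d u := by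
    intro u
    rw [hddef]
    exact Finset.sum_comm
  have e1 : (∑ r, ∑ s, ∑ u, a r s u * Real.log (a r s u)) =
      -∑ r, ∑ s, ∑ u, Real.negMulLog (a r s u) := by
    simp [Real.negMulLog, Finset.sum_neg_distrib]
  have e2 : (∑ r, ∑ s, ∑ u, a r s u * Real.log (b r u)) =
      ∑ r, ∑ u, b r u * Real.log (b r u) := by
    refine Finset.sum_congr rfl fun r _ => ?_
    rw [Finset.sum_comm]
    refine Finset.sum_congr rfl fun u _ => ?_
    rw [hbdef]
    simp only
    rw [Finset.sum_mul]
  have e3 : (∑ r, ∑ s, ∑ u, a r s u * Real.log (c s u)) =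
      ∑ s, ∑ u, c s u * Real.log (c s u) := by
    rw [Finset.sum_comm]
    refine Finset.sum_congr rfl fun s _ => ?_
    rw [Finset.sum_comm]
    refine Finset.sum_congr rfl fun u _ => ?_
    rw [hcdef]
    simp only
    rw [Finset.sum_mul]
  have e4 : (∑ r, ∑ s, ∑ u, a r s u * Real.log (d u)) =
      ∑ u, d u * Real.log (d u) := by
    rw [Finset.sum_congr rfl (fun r (_ : r ∈ Finset.univ) =>
      (Finset.sum_comm : ∑ s, ∑ u, a r s u * Real.log (d u) = _)), Finset.sum_comm]
    refine Finset.sum_congr rfl fun u _ => ?_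
    rw [Finset.sum_mul]
    exact Finset.sum_congr rfl fun r _ => by rw [Finset.sum_mul]
  have e5 : (∑ r, ∑ s, ∑ u, a r s u) = ∑ u, d u := by
    rw [Finset.sum_congr rfl (fun r (_ : r ∈ Finset.univ) =>
      (Finset.sum_comm : ∑ s, ∑ u, a r s u = _)), Finset.sum_comm]
  have e6 : (∑ r, ∑ s, ∑ u, b r u * c s u / d u) = ∑ u, d u := by
    rw [Finset.sum_congr rfl (fun r (_ : r ∈ Finset.univ) =>
      (Finset.sum_comm : ∑ s, ∑ u, b r u * c s u / d u = _)), Finset.sum_comm]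
    refine Finset.sum_congr rfl fun u _ => ?_
    by_cases hdu : d u = 0
    · have hb0 : ∀ r, b r u = 0 := by
        intro r
        refine le_antisymm ?_ (hb r u)
        rw [← hdu]
        exact Finset.single_le_sum (fun r' _ => hb r' u) (Finset.mem_univ r)
      simp [hb0, hdu]
    · have : (∑ r, ∑ s, b r u * c s u / d u) = (∑ r, ∑ s, b r u * c s u) / d u := by
        rw [Finset.sum_div]
        exact Finset.sum_congr rfl fun r _ => by rw [Finset.sum_div]
      rw [this, ← Finset.sum_mul_sum,
        (rfl : (∑ r, b r u) = d u), hcd u, mul_div_assoc, div_self hdu, mul_one]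
  simp only [Finset.sum_sub_distrib, Finset.sum_add_distrib] at hsum
  rw [e1, e2, e3, e4, e5, e6] at hsum
  have g1 : (∑ u, Real.negMulLog (∑ r, ∑ s, a r s u)) = -∑ u, d u * Real.log (d u) := by
    simp [Real.negMulLog_eq_neg, hddef, Finset.sum_neg_distrib]
  have g2 : (∑ r, ∑ u, Real.negMulLog (∑ s, a r s u)) =
      -∑ r, ∑ u, b r u * Real.log (b r u) := by
    simp [Real.negMulLog_eq_neg, hbdef, Finset.sum_neg_distrib]
  have g3 : (∑ s, ∑ u, Real.negMulLog (∑ r, a r s u)) =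
      -∑ s, ∑ u, c s u * Real.log (c s u) := by
    simp [Real.negMulLog_eq_neg, hcdef, Finset.sum_neg_distrib]
  rw [g1, g2, g3]
  linarith


variable {κ : Type*} [Fintype κ]

noncomputable def qv {S : Type*} (p : κ → ℝ) (F : κ → S) (s : S) : ℝ :=
  ∑ t, if F t = s then p t else 0

noncomputable def aent {S : Type*} [Fintype S] (p : κ → ℝ) (F : κ → S) : ℝ :=
  ∑ s, Real.negMulLog (qv p F s)

variable {p : κ → ℝ}

lemma qv_nonneg (hp : ∀ t, 0 ≤ p t) {S : Type*} (F : κ → S) (s : S) : 0 ≤ qv p F s :=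
  Finset.sum_nonneg fun t _ => by split <;> simp [hp t]

lemma sum_qv {S : Type*} [Fintype S] (F : κ → S) : ∑ s, qv p F s = ∑ t, p t := by
  unfold qv
  rw [Finset.sum_comm]
  simp

/-- invariance of entropy under injective post-composition -/
lemma aent_comp {S S' : Type*} [Fintype S] [Fintype S'] {e : S → S'}
    (he : Function.Injective e) (F : κ → S) :
    aent p (fun t => e (F t)) = aent p F := by
  have hq : ∀ s : S, qv p (fun t => e (F t)) (e s) = qv p F s := by
    intro s
    unfold qv
    refine Finset.sum_congr rfl fun t _ => ?_
    simp [he.eq_iff]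
  have h0 : ∀ s' : S', s' ∉ Finset.univ.image e → qv p (fun t => e (F t)) s' = 0 := by
    intro s' hs'
    unfold qv
    refine Finset.sum_eq_zero fun t _ => ?_
    rw [if_neg]
    intro h
    exact hs' (Finset.mem_image.2 ⟨F t, Finset.mem_univ _, h⟩)
  unfold aent
  rw [← Finset.sum_subset (Finset.subset_univ (Finset.univ.image e))
      (fun x _ hx => by rw [h0 x hx, Real.negMulLog_zero]),
    Finset.sum_image (fun a _ b _ h => he h)]
  exact Finset.sum_congr rfl fun s _ => by rw [hq]


section marg

variable {R S U : Type*} (F : κ → R) (G : κ → S) (H : κ → U)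

lemma qv_marg_snd (s : S) [Fintype R] :
    qv p G s = ∑ r : R, qv p (fun t => (F t, G t)) (r, s) := by
  unfold qv
  rw [Finset.sum_comm]
  refine Finset.sum_congr rfl fun t _ => ?_
  by_cases h2 : G t = s <;> simp [Prod.ext_iff, h2]

lemma qv_m1 [Fintype S] (r : R) (u : U) :
    qv p (fun t => (F t, H t)) (r, u) = ∑ s, qv p (fun t => (F t, G t, H t)) (r, s, u) := by
  unfold qv
  rw [Finset.sum_comm]
  refine Finset.sum_congr rfl fun t _ => ?_
  by_cases h1 : F t = r <;> by_cases h3 : H t = u <;> simp [Prod.ext_iff, h1, h3]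

lemma qv_m2 [Fintype R] (s : S) (u : U) :
    qv p (fun t => (G t, H t)) (s, u) = ∑ r, qv p (fun t => (F t, G t, H t)) (r, s, u) := by
  unfold qv
  rw [Finset.sum_comm]
  refine Finset.sum_congr rfl fun t _ => ?_
  by_cases h2 : G t = s <;> by_cases h3 : H t = u <;> simp [Prod.ext_iff, h2, h3]

lemma qv_m3 [Fintype R] [Fintype S] (u : U) :
    qv p H u = ∑ r, ∑ s, qv p (fun t => (F t, G t, H t)) (r, s, u) := by
  have : ∀ r : R, ∑ s, qv p (fun t => (F t, G t, H t)) (r, s, u)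
      = qv p (fun t => (F t, H t)) (r, u) := fun r => (qv_m1 F G H r u).symm
  rw [Finset.sum_congr rfl fun r _ => this r]
  exact qv_marg_snd F H u
end marg

section ineq
variable {R S U : Type*} [Fintype R] [Fintype S] [Fintype U]

lemma aent_snd_le (hp : ∀ t, 0 ≤ p t) (F : κ → R) (G : κ → S) :
    aent p G ≤ aent p (fun t => (F t, G t)) := by
  unfold aent
  have h1 : ∀ s : S, Real.negMulLog (qv p G s) ≤
      ∑ r, Real.negMulLog (qv p (fun t => (F t, G t)) (r, s)) := by
    intro s
    rw [qv_marg_snd F G s]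
    exact negMulLog_sum_le _ _ fun r _ => qv_nonneg hp _ _
  calc ∑ s, Real.negMulLog (qv p G s)
      ≤ ∑ s, ∑ r, Real.negMulLog (qv p (fun t => (F t, G t)) (r, s)) :=
        Finset.sum_le_sum fun s _ => h1 s
    _ = ∑ x : R × S, Real.negMulLog (qv p (fun t => (F t, G t)) x) := by
        rw [Finset.sum_comm]
        exact (Fintype.sum_prod_type
          (f := fun x => Real.negMulLog (qv p (fun t => (F t, G t)) x))).symm

lemma aent_submod (hp : ∀ t, 0 ≤ p t) (F : κ → R) (G : κ → S) (H : κ → U) :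
    aent p (fun t => (F t, G t, H t)) + aent p H ≤
      aent p (fun t => (F t, H t)) + aent p (fun t => (G t, H t)) := by
  have hcore := core (fun r s u => qv p (fun t => (F t, G t, H t)) (r, s, u))
    (fun r s u => qv_nonneg hp _ _)
  have h1 : aent p (fun t => (F t, G t, H t)) =
      ∑ r, ∑ s, ∑ u, Real.negMulLog (qv p (fun t => (F t, G t, H t)) (r, s, u)) := by
    rw [aent, Fintype.sum_prod_type]
    exact Finset.sum_congr rfl fun r _ => Fintype.sum_prod_type _
  have h2 : aent p H =
      ∑ u, Real.negMulLog (∑ r, ∑ s, qv p (fun t => (F t, G t, H t)) (r, s, u)) := by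
    rw [aent]
    exact Finset.sum_congr rfl fun u _ => by rw [← qv_m3 F G H u]
  have h3 : aent p (fun t => (F t, H t)) =
      ∑ r, ∑ u, Real.negMulLog (∑ s, qv p (fun t => (F t, G t, H t)) (r, s, u)) := by
    rw [aent, Fintype.sum_prod_type]
    exact Finset.sum_congr rfl fun r _ => Finset.sum_congr rfl fun u _ => by
      rw [← qv_m1 F G H r u]
  have h4 : aent p (fun t => (G t, H t)) =
      ∑ s, ∑ u, Real.negMulLog (∑ r, qv p (fun t => (F t, G t, H t)) (r, s, u)) := by
    rw [aent, Fintype.sum_prod_type]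
    exact Finset.sum_congr rfl fun s _ => Finset.sum_congr rfl fun u _ => by
      rw [← qv_m2 F G H s u]
  rw [h1, h2, h3, h4]
  exact hcore
end ineq

section layer
variable {R R' S U : Type*} [Fintype R] [Fintype R'] [Fintype S] [Fintype U]

noncomputable def acent (p : κ → ℝ) {R S : Type*} [Fintype R] [Fintype S]
    (F : κ → R) (G : κ → S) : ℝ :=
  aent p (fun t => (F t, G t)) - aent p G

noncomputable def acmi (p : κ → ℝ) {R S U : Type*} [Fintype R] [Fintype S] [Fintype U]
    (F : κ → R) (G : κ → S) (H : κ → U) : ℝ :=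
  acent p F H + acent p G H - acent p (fun t => (F t, G t)) H

noncomputable def ami (p : κ → ℝ) {R S : Type*} [Fintype R] [Fintype S]
    (F : κ → R) (G : κ → S) : ℝ :=
  aent p F + aent p G - aent p (fun t => (F t, G t))

lemma acent_nonneg (hp : ∀ t, 0 ≤ p t) (F : κ → R) (G : κ → S) : 0 ≤ acent p F G := by
  unfold acent
  linarith [aent_snd_le hp F G]

lemma acent_chain (F : κ → R) (F' : κ → R') (H : κ → U) :
    acent p (fun t => (F t, F' t)) H = acent p F' H + acent p F (fun t => (F' t, H t)) := by
  simp only [acent]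
  have e1 : aent p (fun t => ((F t, F' t), H t)) = aent p (fun t => (F t, (F' t, H t))) :=
    aent_comp (e := fun x : R × R' × U => ((x.1, x.2.1), x.2.2))
      (fun u v huv => by simp only [Prod.ext_iff] at huv ⊢; tauto)
      (fun t => (F t, (F' t, H t)))
  rw [e1]
  ring

lemma acmi_eq (F : κ → R) (G : κ → S) (H : κ → U) :
    acmi p F G H = acent p F H - acent p F (fun t => (G t, H t)) := by
  simp only [acmi]
  rw [acent_chain F G H]
  ring

lemma acmi_nonneg (hp : ∀ t, 0 ≤ p t) (F : κ → R) (G : κ → S) (H : κ → U) :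
    0 ≤ acmi p F G H := by
  simp only [acmi, acent]
  have e1 : aent p (fun t => ((F t, G t), H t)) = aent p (fun t => (F t, G t, H t)) :=
    aent_comp (e := fun x : R × S × U => ((x.1, x.2.1), x.2.2))
      (fun u v huv => by simp only [Prod.ext_iff] at huv ⊢; tauto)
      (fun t => (F t, G t, H t))
  rw [e1]
  linarith [aent_submod hp F G H]

lemma acent_pair_le (hp : ∀ t, 0 ≤ p t) (F : κ → R) (G : κ → S) (H : κ → U) :
    acent p F (fun t => (G t, H t)) ≤ acent p F H := by
  have h := acmi_nonneg hp F G H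
  rw [acmi_eq] at h
  linarith

lemma ami_nonneg (hp : ∀ t, 0 ≤ p t) (hp1 : ∑ t, p t = 1) (F : κ → R) (G : κ → S) :
    0 ≤ ami p F G := by
  have hsub := aent_submod hp F G (fun _ => (() : Unit))
  have e1 : aent p (fun t => (F t, G t, ())) = aent p (fun t => (F t, G t)) :=
    aent_comp (e := fun x : R × S => (x.1, x.2, ()))
      (fun u v huv => by simp only [Prod.ext_iff] at huv ⊢; tauto)
      (fun t => (F t, G t))
  have e2 : aent p (fun t => (F t, ())) = aent p F :=
    aent_comp (e := fun x : R => (x, ()))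
      (fun u v huv => by simp only [Prod.ext_iff] at huv ⊢; tauto) F
  have e3 : aent p (fun t => (G t, ())) = aent p G :=
    aent_comp (e := fun x : S => (x, ()))
      (fun u v huv => by simp only [Prod.ext_iff] at huv ⊢; tauto) G
  have e4 : aent p (fun _ : κ => ()) = 0 := by
    simp [aent, qv, hp1]
  rw [e1, e2, e4] at hsub
  have e3' : aent p (fun t => (G t, ())) = aent p G := e3
  rw [e3'] at hsub
  unfold ami
  linarith

lemma ami_chain (F : κ → R) (F' : κ → R') (G : κ → S) :
    ami p (fun t => (F t, F' t)) G = ami p F' G + acmi p F G F' := by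
  simp only [ami, acmi, acent]
  have e1 : aent p (fun t => (G t, F' t)) = aent p (fun t => (F' t, G t)) :=
    aent_comp (e := fun x : R' × S => (x.2, x.1))
      (fun u v huv => by simp only [Prod.ext_iff] at huv ⊢; tauto)
      (fun t => (F' t, G t))
  have e2 : aent p (fun t => ((F t, G t), F' t)) = aent p (fun t => ((F t, F' t), G t)) :=
    aent_comp (e := fun x : (R × R') × S => ((x.1.1, x.2), x.1.2))
      (fun u v huv => by simp only [Prod.ext_iff] at huv ⊢; tauto)
      (fun t => ((F t, F' t), G t))
  rw [e1, e2]
  ring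

lemma acmi_chain (F : κ → R) (F' : κ → R') (G : κ → S) (H : κ → U) :
    acmi p (fun t => (F t, F' t)) G H = acmi p F' G H + acmi p F G (fun t => (F' t, H t)) := by
  rw [acmi_eq, acmi_eq, acmi_eq, acent_chain F F' H,
    acent_chain F F' (fun t => (G t, H t))]
  have hperm : acent p F (fun t => (F' t, (G t, H t))) =
      acent p F (fun t => (G t, (F' t, H t))) := by
    simp only [acent]
    have e1 : aent p (fun t => (F t, (F' t, (G t, H t)))) =
        aent p (fun t => (F t, (G t, (F' t, H t)))) :=
      aent_comp (e := fun x : R × S × R' × U => (x.1, (x.2.2.1, (x.2.1, x.2.2.2))))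
        (fun u v huv => by simp only [Prod.ext_iff] at huv ⊢; tauto)
        (fun t => (F t, (G t, (F' t, H t))))
    have e2 : aent p (fun t => (F' t, (G t, H t))) =
        aent p (fun t => (G t, (F' t, H t))) :=
      aent_comp (e := fun x : S × R' × U => (x.2.1, (x.1, x.2.2)))
        (fun u v huv => by simp only [Prod.ext_iff] at huv ⊢; tauto)
        (fun t => (G t, (F' t, H t)))
    rw [e1, e2]
  rw [hperm]
  ring

lemma acmi_comm_fst (F : κ → R) (F' : κ → R') (G : κ → S) (H : κ → U) :
    acmi p (fun t => (F t, F' t)) G H = acmi p (fun t => (F' t, F t)) G H := by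
  simp only [acmi, acent]
  have e1 : aent p (fun t => ((F t, F' t), H t)) = aent p (fun t => ((F' t, F t), H t)) :=
    aent_comp (e := fun x : (R' × R) × U => ((x.1.2, x.1.1), x.2))
      (fun u v huv => by simp only [Prod.ext_iff] at huv ⊢; tauto)
      (fun t => ((F' t, F t), H t))
  have e2 : aent p (fun t => (((F t, F' t), G t), H t)) =
      aent p (fun t => (((F' t, F t), G t), H t)) :=
    aent_comp (e := fun x : ((R' × R) × S) × U => (((x.1.1.2, x.1.1.1), x.1.2), x.2))
      (fun u v huv => by simp only [Prod.ext_iff] at huv ⊢; tauto)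
      (fun t => (((F' t, F t), G t), H t))
  rw [e1, e2]
end layer

section main
variable {A B C D E : Type*} [Fintype A] [Fintype B] [Fintype C] [Fintype D] [Fintype E]

theorem abstract_main (hp : ∀ t, 0 ≤ p t) (hp1 : ∑ t, p t = 1)
    (a : κ → A) (qm : κ → B) (x : κ → C) (y : κ → D) (g : B → E)
    (h1 : acent p a (fun t => (x t, g (qm t))) = 0)
    (h2 : ami p (fun t => (x t, y t)) qm = 0) :
    acent p a (fun t => (y t, g (qm t))) = acent p a (fun t => (y t, qm t)) := by
  have hkey : acmi p a qm (fun t => (y t, g (qm t))) =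
      acent p a (fun t => (y t, g (qm t))) - acent p a (fun t => (y t, qm t)) := by
    rw [acmi_eq]
    have hx : acent p a (fun t => (qm t, (y t, g (qm t)))) =
        acent p a (fun t => (y t, qm t)) := by
      simp only [acent]
      have e1 : aent p (fun t => (a t, (qm t, (y t, g (qm t))))) =
          aent p (fun t => (a t, (y t, qm t))) :=
        aent_comp (e := fun z : A × D × B => (z.1, (z.2.2, (z.2.1, g z.2.2))))
          (fun u v huv => by simp only [Prod.ext_iff] at huv ⊢; tauto)
          (fun t => (a t, (y t, qm t)))
      have e2 : aent p (fun t => (qm t, (y t, g (qm t)))) =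
          aent p (fun t => (y t, qm t)) :=
        aent_comp (e := fun z : D × B => (z.2, (z.1, g z.2)))
          (fun u v huv => by simp only [Prod.ext_iff] at huv ⊢; tauto)
          (fun t => (y t, qm t))
      rw [e1, e2]
    rw [hx]
  have hA : acmi p a qm (fun t => (x t, (y t, g (qm t)))) ≤ 0 := by
    rw [acmi_eq]
    have h0 : 0 ≤ acent p a (fun t => (qm t, (x t, (y t, g (qm t))))) := acent_nonneg hp _ _
    have hperm : acent p a (fun t => (x t, (y t, g (qm t)))) =
        acent p a (fun t => (y t, (x t, g (qm t)))) := by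
      simp only [acent]
      have e1 : aent p (fun t => (a t, (x t, (y t, g (qm t))))) =
          aent p (fun t => (a t, (y t, (x t, g (qm t))))) :=
        aent_comp (e := fun z : A × D × C × E => (z.1, (z.2.2.1, (z.2.1, z.2.2.2))))
          (fun u v huv => by simp only [Prod.ext_iff] at huv ⊢; tauto)
          (fun t => (a t, (y t, (x t, g (qm t)))))
      have e2 : aent p (fun t => (x t, (y t, g (qm t)))) =
          aent p (fun t => (y t, (x t, g (qm t)))) :=
        aent_comp (e := fun z : D × C × E => (z.2.1, (z.1, z.2.2)))
          (fun u v huv => by simp only [Prod.ext_iff] at huv ⊢; tauto)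
          (fun t => (y t, (x t, g (qm t))))
      rw [e1, e2]
    have hle : acent p a (fun t => (y t, (x t, g (qm t)))) ≤
        acent p a (fun t => (x t, g (qm t))) :=
      acent_pair_le hp a y (fun t => (x t, g (qm t)))
    rw [hperm]
    rw [h1] at hle
    linarith
  have hxy0 : acmi p x qm y = 0 := by
    have hch : ami p (fun t => (x t, y t)) qm = ami p y qm + acmi p x qm y :=
      ami_chain x y qm
    have n1 := ami_nonneg hp hp1 y qm
    have n2 := acmi_nonneg hp x qm y
    rw [h2] at hch
    linarith
  have hcxy : acent p x (fun t => (qm t, y t)) = acent p x y := by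
    have h := acmi_eq (p := p) x qm y
    rw [hxy0] at h
    linarith
  have hB : acmi p x qm (fun t => (y t, g (qm t))) ≤ 0 := by
    rw [acmi_eq]
    have hperm : acent p x (fun t => (qm t, (y t, g (qm t)))) =
        acent p x (fun t => (qm t, y t)) := by
      simp only [acent]
      have e1 : aent p (fun t => (x t, (qm t, (y t, g (qm t))))) =
          aent p (fun t => (x t, (qm t, y t))) :=
        aent_comp (e := fun z : C × B × D => (z.1, (z.2.1, (z.2.2, g z.2.1))))
          (fun u v huv => by simp only [Prod.ext_iff] at huv ⊢; tauto)
          (fun t => (x t, (qm t, y t)))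
      have e2 : aent p (fun t => (qm t, (y t, g (qm t)))) =
          aent p (fun t => (qm t, y t)) :=
        aent_comp (e := fun z : B × D => (z.1, (z.2, g z.1)))
          (fun u v huv => by simp only [Prod.ext_iff] at huv ⊢; tauto)
          (fun t => (qm t, y t))
      rw [e1, e2]
    have hperm2 : acent p x (fun t => (y t, g (qm t))) =
        acent p x (fun t => (g (qm t), y t)) := by
      simp only [acent]
      have e1 : aent p (fun t => (x t, (y t, g (qm t)))) =
          aent p (fun t => (x t, (g (qm t), y t))) :=
        aent_comp (e := fun z : C × E × D => (z.1, (z.2.2, z.2.1)))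
          (fun u v huv => by simp only [Prod.ext_iff] at huv ⊢; tauto)
          (fun t => (x t, (g (qm t), y t)))
      have e2 : aent p (fun t => (y t, g (qm t))) =
          aent p (fun t => (g (qm t), y t)) :=
        aent_comp (e := fun z : E × D => (z.2, z.1))
          (fun u v huv => by simp only [Prod.ext_iff] at huv ⊢; tauto)
          (fun t => (g (qm t), y t))
      rw [e1, e2]
    have hle : acent p x (fun t => (g (qm t), y t)) ≤ acent p x y :=
      acent_pair_le hp x (fun t => g (qm t)) y
    rw [hperm, hcxy, hperm2]
    linarith
  have hchain1 : acmi p (fun t => (x t, a t)) qm (fun t => (y t, g (qm t))) =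
      acmi p a qm (fun t => (y t, g (qm t))) +
        acmi p x qm (fun t => (a t, (y t, g (qm t)))) :=
    acmi_chain x a qm (fun t => (y t, g (qm t)))
  have hchain2 : acmi p (fun t => (a t, x t)) qm (fun t => (y t, g (qm t))) =
      acmi p x qm (fun t => (y t, g (qm t))) +
        acmi p a qm (fun t => (x t, (y t, g (qm t)))) :=
    acmi_chain a x qm (fun t => (y t, g (qm t)))
  have hcomm : acmi p (fun t => (x t, a t)) qm (fun t => (y t, g (qm t))) =
      acmi p (fun t => (a t, x t)) qm (fun t => (y t, g (qm t))) :=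
    acmi_comm_fst x a qm (fun t => (y t, g (qm t)))
  have hn1 := acmi_nonneg hp x qm (fun t => (a t, (y t, g (qm t))))
  have hge := acmi_nonneg hp a qm (fun t => (y t, g (qm t)))
  linarith
end main

end S9


open MeasureTheory


lemma S9.reduce {Ω : Type*} [MeasurableSpace Ω] (μ : Measure Ω) [IsProbabilityMeasure μ]
    {κ : Type*} [Fintype κ] (T : Ω → κ) (hTs : ∀ t, MeasurableSet (T ⁻¹' {t}))
    {S : Type*} [Fintype S] (F : κ → S) :
    entropy μ (fun ω => F (T ω)) = S9.aent (fun t => (μ (T ⁻¹' {t})).toReal) F := by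
  classical
  have hdisj : ∀ (u : Finset κ), (↑u : Set κ).PairwiseDisjoint (fun t => T ⁻¹' {t}) := by
    intro u t1 _ t2 _ hne
    refine Set.disjoint_left.2 fun ω h1 h2 => hne ?_
    simp only [Set.mem_preimage, Set.mem_singleton_iff] at h1 h2
    rw [← h1, ← h2]
  unfold entropy S9.aent
  rw [← Finset.sum_neg_distrib]
  refine Finset.sum_congr rfl fun s _ => ?_
  have hset : (fun ω => F (T ω)) ⁻¹' {s} =
      ⋃ t ∈ Finset.univ.filter (fun t => F t = s), T ⁻¹' {t} := by
    ext ω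
    simp only [Set.mem_preimage, Set.mem_singleton_iff, Set.mem_iUnion,
      Finset.mem_filter, Finset.mem_univ, true_and]
    constructor
    · intro h
      exact ⟨T ω, h, rfl⟩
    · rintro ⟨t, h1, h2⟩
      rw [h2, h1]
  have hμ : (μ ((fun ω => F (T ω)) ⁻¹' {s})).toReal =
      ∑ t ∈ Finset.univ.filter (fun t => F t = s), (μ (T ⁻¹' {t})).toReal := by
    rw [hset, measure_biUnion_finset (hdisj _) (fun t _ => hTs t),
      ENNReal.toReal_sum (fun t _ => measure_ne_top μ _)]
  have hqv : S9.qv (fun t => (μ (T ⁻¹' {t})).toReal) F s =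
      ∑ t ∈ Finset.univ.filter (fun t => F t = s), (μ (T ⁻¹' {t})).toReal := by
    rw [S9.qv, Finset.sum_filter]
  rw [hμ, ← hqv, Real.negMulLog_eq_neg]

/-- If `A, Q, X, Y` are finite-valued random variables, `Q' = g(Q)`,
`H(A | (X, Q')) = 0` and `I((X, Y) ; Q) = 0`, then `H(A | (Y, Q')) = H(A | (Y, Q))`. -/
theorem stmt_9 {Ω : Type*} [MeasurableSpace Ω] (μ : Measure Ω) [IsProbabilityMeasure μ]
    {α β γ δ ε : Type*} [Fintype α] [Fintype β] [Fintype γ] [Fintype δ] [Fintype ε]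
    [MeasurableSpace α] [MeasurableSingletonClass α]
    [MeasurableSpace β] [MeasurableSingletonClass β]
    [MeasurableSpace γ] [MeasurableSingletonClass γ]
    [MeasurableSpace δ] [MeasurableSingletonClass δ]
    [MeasurableSpace ε] [MeasurableSingletonClass ε]
    (A : Ω → α) (Q : Ω → β) (X : Ω → γ) (Y : Ω → δ) (g : β → ε)
    (hA : Measurable A) (hQ : Measurable Q) (hX : Measurable X) (hY : Measurable Y)
    (h1 : condEntropy μ A (fun ω => (X ω, g (Q ω))) = 0)
    (h2 : mutualInfo μ (fun ω => (X ω, Y ω)) Q = 0) :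
    condEntropy μ A (fun ω => (Y ω, g (Q ω))) = condEntropy μ A (fun ω => (Y ω, Q ω)) := by
    classical
  set T : Ω → α × β × γ × δ := fun ω => (A ω, Q ω, X ω, Y ω) with hT
  have hTm : Measurable T := (hA.prodMk (hQ.prodMk (hX.prodMk hY)))
  have hTs : ∀ t : α × β × γ × δ, MeasurableSet (T ⁻¹' {t}) := fun t =>
    hTm (measurableSet_singleton t)
  set p : α × β × γ × δ → ℝ := fun t => (μ (T ⁻¹' {t})).toReal with hpdef
  have hp : ∀ t, 0 ≤ p t := fun t => ENNReal.toReal_nonneg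
  have hdisj : ∀ (u : Finset (α × β × γ × δ)),
      (↑u : Set (α × β × γ × δ)).PairwiseDisjoint (fun t => T ⁻¹' {t}) := by
    intro u t1 _ t2 _ hne
    refine Set.disjoint_left.2 fun ω h1 h2 => hne ?_
    simp only [Set.mem_preimage, Set.mem_singleton_iff] at h1 h2
    rw [← h1, ← h2]
  have hp1 : ∑ t, p t = 1 := by
    have huniv : (⋃ t ∈ (Finset.univ : Finset (α × β × γ × δ)), T ⁻¹' {t}) = Set.univ := by
      ext ω
      simp
    have h := measure_biUnion_finset (μ := μ) (hdisj Finset.univ) (fun t _ => hTs t)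
    rw [huniv, measure_univ] at h
    have := congrArg ENNReal.toReal h
    rw [ENNReal.toReal_sum (fun t _ => measure_ne_top μ _)] at this
    simpa [hpdef] using this.symm
  have r1 : entropy μ (fun ω => (A ω, (Y ω, g (Q ω)))) =
      S9.aent p (fun t : α × β × γ × δ => (t.1, (t.2.2.2, g t.2.1))) :=
    S9.reduce μ T hTs fun t => (t.1, (t.2.2.2, g t.2.1))
  have r2 : entropy μ (fun ω => (Y ω, g (Q ω))) =
      S9.aent p (fun t : α × β × γ × δ => (t.2.2.2, g t.2.1)) :=
    S9.reduce μ T hTs fun t => (t.2.2.2, g t.2.1)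
  have r3 : entropy μ (fun ω => (A ω, (Y ω, Q ω))) =
      S9.aent p (fun t : α × β × γ × δ => (t.1, (t.2.2.2, t.2.1))) :=
    S9.reduce μ T hTs fun t => (t.1, (t.2.2.2, t.2.1))
  have r4 : entropy μ (fun ω => (Y ω, Q ω)) =
      S9.aent p (fun t : α × β × γ × δ => (t.2.2.2, t.2.1)) :=
    S9.reduce μ T hTs fun t => (t.2.2.2, t.2.1)
  have r5 : entropy μ (fun ω => (A ω, (X ω, g (Q ω)))) =
      S9.aent p (fun t : α × β × γ × δ => (t.1, (t.2.2.1, g t.2.1))) :=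
    S9.reduce μ T hTs fun t => (t.1, (t.2.2.1, g t.2.1))
  have r6 : entropy μ (fun ω => (X ω, g (Q ω))) =
      S9.aent p (fun t : α × β × γ × δ => (t.2.2.1, g t.2.1)) :=
    S9.reduce μ T hTs fun t => (t.2.2.1, g t.2.1)
  have r7 : entropy μ (fun ω => (X ω, Y ω)) =
      S9.aent p (fun t : α × β × γ × δ => (t.2.2.1, t.2.2.2)) :=
    S9.reduce μ T hTs fun t => (t.2.2.1, t.2.2.2)
  have r8 : entropy μ (fun ω => ((X ω, Y ω), Q ω)) =
      S9.aent p (fun t : α × β × γ × δ => ((t.2.2.1, t.2.2.2), t.2.1)) :=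
    S9.reduce μ T hTs fun t => ((t.2.2.1, t.2.2.2), t.2.1)
  have r9 : entropy μ Q = S9.aent p (fun t : α × β × γ × δ => t.2.1) :=
    S9.reduce μ T hTs fun t => t.2.1
  simp only [condEntropy] at h1 ⊢
  simp only [mutualInfo, condEntropy] at h2
  rw [r5, r6] at h1
  rw [r7, r8, r9] at h2
  have h1' : S9.acent p (fun t : α × β × γ × δ => t.1)
      (fun t : α × β × γ × δ => (t.2.2.1, g t.2.1)) = 0 := by
    simp only [S9.acent]
    linarith
  have h2' : S9.ami p (fun t : α × β × γ × δ => (t.2.2.1, t.2.2.2))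
      (fun t : α × β × γ × δ => t.2.1) = 0 := by
    simp only [S9.ami]
    linarith
  have main := S9.abstract_main hp hp1 (fun t : α × β × γ × δ => t.1)
    (fun t : α × β × γ × δ => t.2.1) (fun t : α × β × γ × δ => t.2.2.1)
    (fun t : α × β × γ × δ => t.2.2.2) g h1' h2'
  simp only [S9.acent] at main
  rw [r1, r2, r3, r4]
  linarith
end

section
/- Fix an integer N ≥ 3, a real L ≥ 0, and an index k ∈ {1,…,N}, with index arithmetic modulo N in {1,…,N}. Let W_1, …, W_N be mutually independent finite-valued random variables with H(W_j) = L for each j, let Q be a finite-valued random variable with I(⟨W_1,…,W_N⟩ ; Q) = 0, and let A_n^{[k]}, A_k^{[k−1]}, A_{k+1}^{[k+1]} (n ∈ {1,…,N}) be finite-valued random variables satisfying: (i) H(A_n^{[k]} | ⟨W_n, W_{n−1}, Q⟩) = 0 for all n; (ii) H(W_k | ⟨A_1^{[k]}, …, A_N^{[k]}, Q⟩) = 0; (iii) H(A_k^{[k]} | ⟨W_k, Q⟩) = H(A_k^{[k−1]} | ⟨W_k, Q⟩) and H(A_{k+1}^{[k]} | ⟨W_k, W_{k−1}, Q⟩)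 = H(A_{k+1}^{[k+1]} | ⟨W_k, W_{k−1}, Q⟩). Then ∑_{n=1}^{N} H(A_n^{[k]} | Q) ≥ L + H(A_k^{[k−1]} | ⟨W_k, Q⟩) + H(A_{k+1}^{[k+1]} | ⟨W_k, W_{k−1}, Q⟩). -/
open MeasureTheory

open ProbabilityTheory

namespace PIRAux
set_option linter.unusedSectionVars false

lemma negMulLog_sum_le {ι : Type*} (F : Finset ι) (a : ι → ℝ) (ha : ∀ i ∈ F, 0 ≤ a i) :
    Real.negMulLog (∑ i ∈ F, a i) ≤ ∑ i ∈ F, Real.negMulLog (a i) := by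
  have key : ∀ i ∈ F, -(a i * Real.log (∑ j ∈ F, a j)) ≤ Real.negMulLog (a i) := by
    intro i hi
    rw [Real.negMulLog, neg_mul]
    rcases eq_or_lt_of_le (ha i hi) with h | h
    · simp [← h]
    · have hle : a i ≤ ∑ j ∈ F, a j := Finset.single_le_sum ha hi
      exact neg_le_neg (mul_le_mul_of_nonneg_left (Real.log_le_log h hle) (ha i hi))
  calc Real.negMulLog (∑ i ∈ F, a i) = ∑ i ∈ F, -(a i * Real.log (∑ j ∈ F, a j)) := by
        rw [Real.negMulLog, neg_mul, Finset.sum_mul, ← Finset.sum_neg_distrib]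
      _ ≤ _ := Finset.sum_le_sum key

variable {Ω : Type*} [MeasurableSpace Ω] {μ : Measure Ω} [IsProbabilityMeasure μ]

/-- All singleton preimages are measurable. -/
def FM {S : Type*} (X : Ω → S) : Prop := ∀ s : S, MeasurableSet (X ⁻¹' {s})

lemma FM.of_meas {S : Type*} [MeasurableSpace S] [MeasurableSingletonClass S] {X : Ω → S}
    (h : Measurable X) : FM X := fun s => h (measurableSet_singleton s)

lemma FM.pair {S T : Type*} {X : Ω → S} {Y : Ω → T} (hX : FM X) (hY : FM Y) :
    FM (fun ω => (X ω, Y ω)) := by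
  rintro ⟨s, t⟩
  have h : (fun ω => (X ω, Y ω)) ⁻¹' {(s, t)} = X ⁻¹' {s} ∩ Y ⁻¹' {t} := by
    ext ω; simp [Prod.ext_iff]
  rw [h]; exact (hX s).inter (hY t)

lemma FM.const {S : Type*} (c : S) : FM (fun _ : Ω => c) := by
  intro s
  by_cases h : c = s
  · have : (fun _ : Ω => c) ⁻¹' {s} = Set.univ := by ext ω; simp [h]
    rw [this]; exact MeasurableSet.univ
  · have : (fun _ : Ω => c) ⁻¹' {s} = ∅ := by ext ω; simp [h]
    rw [this]; exact MeasurableSet.empty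

lemma FM.comp {S T : Type*} [Fintype S] {X : Ω → S} (hX : FM X) (g : S → T) :
    FM (fun ω => g (X ω)) := by
  intro t
  have h : (fun ω => g (X ω)) ⁻¹' {t} = ⋃ (s : S) (_ : g s = t), X ⁻¹' {s} := by
    ext ω
    simp only [Set.mem_preimage, Set.mem_singleton_iff, Set.mem_iUnion]
    exact ⟨fun h => ⟨X ω, h, rfl⟩, fun ⟨s, hs, hXs⟩ => by rw [hXs]; exact hs⟩
  rw [h]
  exact MeasurableSet.iUnion fun s => MeasurableSet.iUnion fun _ => hX s

lemma FM.pi {ι S : Type*} [Fintype ι] {X : ι → Ω → S} (hX : ∀ i, FM (X i)) :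
    FM (fun ω => fun i => X i ω) := by
  intro v
  have h : (fun ω => fun i => X i ω) ⁻¹' {v} = ⋂ i, X i ⁻¹' {v i} := by
    ext ω; simp [funext_iff]
  rw [h]; exact MeasurableSet.iInter fun i => hX i (v i)

/-- The probability mass function of `X`. -/
noncomputable def pm (μ : Measure Ω) {S : Type*} (X : Ω → S) (s : S) : ℝ :=
  (μ (X ⁻¹' {s})).toReal

lemma pm_nonneg {S : Type*} (X : Ω → S) (s : S) : 0 ≤ pm μ X s := ENNReal.toReal_nonneg

lemma entropy_eq {S : Type*} [Fintype S] (X : Ω → S) :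
    entropy μ X = ∑ s, Real.negMulLog (pm μ X s) := by
  simp only [entropy, Real.negMulLog, neg_mul, pm, Finset.sum_neg_distrib]

lemma pm_comp {S T : Type*} [Fintype S] [DecidableEq T] {X : Ω → S} (hX : FM X)
    (g : S → T) (t : T) :
    pm μ (fun ω => g (X ω)) t = ∑ s ∈ Finset.univ.filter (fun s => g s = t), pm μ X s := by
  have hset : (fun ω => g (X ω)) ⁻¹' {t}
      = X ⁻¹' ↑(Finset.univ.filter fun s => g s = t) := by
    ext ω; simp
  have h := sum_measure_preimage_singleton (μ := μ)
    (Finset.univ.filter fun s => g s = t) (fun s _ => hX s)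
  rw [pm, hset, ← h, ENNReal.toReal_sum (fun a _ => measure_ne_top μ _)]
  rfl

lemma sum_pm {S : Type*} [Fintype S] {X : Ω → S} (hX : FM X) :
    ∑ s, pm μ X s = 1 := by
  have h := sum_measure_preimage_singleton (μ := μ) Finset.univ (fun s _ => hX s)
  rw [Finset.coe_univ, Set.preimage_univ, measure_univ] at h
  calc ∑ s, pm μ X s = (∑ s, μ (X ⁻¹' {s})).toReal :=
        (ENNReal.toReal_sum (fun a _ => measure_ne_top μ _)).symm
    _ = 1 := by rw [h, ENNReal.toReal_one]

lemma entropy_comp_le {S T : Type*} [Fintype S] [Fintype T] {X : Ω → S} (hX : FM X)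
    (g : S → T) : entropy μ (fun ω => g (X ω)) ≤ entropy μ X := by
  classical
  rw [entropy_eq, entropy_eq,
    ← Finset.sum_fiberwise Finset.univ g (fun s => Real.negMulLog (pm μ X s))]
  apply Finset.sum_le_sum
  intro t _
  rw [pm_comp hX g t]
  exact negMulLog_sum_le _ _ (fun s _ => pm_nonneg X s)

lemma entropy_comp_inj {S T : Type*} [Fintype S] [Fintype T] {X : Ω → S} (hX : FM X)
    {g : S → T} (hg : Function.Injective g) : entropy μ (fun ω => g (X ω)) = entropy μ X := by
  classical
  rw [entropy_eq, entropy_eq,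
    ← Finset.sum_fiberwise Finset.univ g (fun s => Real.negMulLog (pm μ X s))]
  apply Finset.sum_congr rfl
  intro t _
  rw [pm_comp hX g t]
  rcases (Finset.univ.filter fun s => g s = t).eq_empty_or_nonempty with h | ⟨s, hs⟩
  · rw [h]; simp
  · have hsing : (Finset.univ.filter fun s => g s = t) = {s} := by
      apply Finset.eq_singleton_iff_unique_mem.mpr
      refine ⟨hs, fun x hx => ?_⟩
      simp only [Finset.mem_filter, Finset.mem_univ, true_and] at hx hs
      exact hg (hx.trans hs.symm)
    rw [hsing, Finset.sum_singleton, Finset.sum_singleton]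


lemma negMulLog_eq' (x : ℝ) : Real.negMulLog x = -(x * Real.log x) := by
  rw [Real.negMulLog, neg_mul]

lemma neg_sum_mul {ι : Type*} (F : Finset ι) (a : ι → ℝ) (c : ℝ) :
    -((∑ i ∈ F, a i) * c) = ∑ i ∈ F, -(a i * c) := by
  rw [Finset.sum_mul, ← Finset.sum_neg_distrib]

/-- Two-dimensional submodularity core (Gibbs' inequality). -/
lemma submod_plane {S T : Type*} [Fintype S] [Fintype T] (p : S → T → ℝ)
    (hp : ∀ s t, 0 ≤ p s t) :
    (∑ s, ∑ t, Real.negMulLog (p s t)) + Real.negMulLog (∑ s, ∑ t, p s t)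
      ≤ (∑ s, Real.negMulLog (∑ t, p s t)) + ∑ t, Real.negMulLog (∑ s, p s t) := by
  classical
  set q : S → ℝ := fun s => ∑ t, p s t with hqdef
  set m : T → ℝ := fun t => ∑ s, p s t with hmdef
  set r : ℝ := ∑ s, ∑ t, p s t with hrdef
  have hq : ∀ s, 0 ≤ q s := fun s => Finset.sum_nonneg fun t _ => hp s t
  have hm : ∀ t, 0 ≤ m t := fun t => Finset.sum_nonneg fun s _ => hp s t
  have hr : 0 ≤ r := Finset.sum_nonneg fun s _ => hq s
  have hqr : ∀ s, q s ≤ r := fun s =>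
    Finset.single_le_sum (fun s' _ => hq s') (Finset.mem_univ s)
  have hqsum : ∑ s, q s = r := rfl
  have hmsum : ∑ t, m t = r := by simp only [hmdef]; exact Finset.sum_comm
  have hpq : ∀ s t, p s t ≤ q s := fun s t =>
    Finset.single_le_sum (fun t' _ => hp s t') (Finset.mem_univ t)
  have hpm : ∀ s t, p s t ≤ m t := fun s t =>
    Finset.single_le_sum (fun s' _ => hp s' t) (Finset.mem_univ s)
  have E0 : ∑ s, ∑ t, Real.negMulLog (p s t) = ∑ x : S × T, Real.negMulLog (p x.1 x.2) := by
    exact (Fintype.sum_prod_type (fun x : S × T => Real.negMulLog (p x.1 x.2))).symm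
  have E1 : Real.negMulLog r = ∑ x : S × T, -(p x.1 x.2 * Real.log r) := by
    rw [Fintype.sum_prod_type]
    show Real.negMulLog r = ∑ s, ∑ t, -(p s t * Real.log r)
    rw [negMulLog_eq']
    calc -(r * Real.log r) = ∑ s, -(q s * Real.log r) := by
          conv_lhs => rw [show r * Real.log r = (∑ s, q s) * Real.log r from by rw [hqsum]]
          exact neg_sum_mul _ _ _
      _ = ∑ s, ∑ t, -(p s t * Real.log r) := by
          refine Finset.sum_congr rfl fun s _ => ?_
          conv_lhs => rw [show q s = ∑ t, p s t from rfl]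
          exact neg_sum_mul _ _ _
  have E2 : ∑ s, Real.negMulLog (q s) = ∑ x : S × T, -(p x.1 x.2 * Real.log (q x.1)) := by
    rw [Fintype.sum_prod_type]
    show ∑ s, Real.negMulLog (q s) = ∑ s, ∑ t, -(p s t * Real.log (q s))
    refine Finset.sum_congr rfl fun s _ => ?_
    rw [negMulLog_eq']
    conv_lhs => rw [show q s * Real.log (q s) = (∑ t, p s t) * Real.log (q s) from by
      rw [show (∑ t, p s t) = q s from rfl]]
    exact neg_sum_mul _ _ _
  have E3 : ∑ t, Real.negMulLog (m t) = ∑ x : S × T, -(p x.1 x.2 * Real.log (m x.2)) := by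
    rw [Fintype.sum_prod_type, Finset.sum_comm]
    show ∑ t, Real.negMulLog (m t) = ∑ t, ∑ s, -(p s t * Real.log (m t))
    refine Finset.sum_congr rfl fun t _ => ?_
    rw [negMulLog_eq']
    conv_lhs => rw [show m t * Real.log (m t) = (∑ s, p s t) * Real.log (m t) from by
      rw [show (∑ s, p s t) = m t from rfl]]
    exact neg_sum_mul _ _ _
  have E5 : 0 ≤ ∑ x : S × T, (p x.1 x.2 - q x.1 * m x.2 / r) := by
    have hsum1 : ∑ x : S × T, p x.1 x.2 = r := by rw [Fintype.sum_prod_type]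
    have hsum2 : ∑ x : S × T, q x.1 * m x.2 / r = r * (r / r) := by
      rw [Fintype.sum_prod_type]
      have h1 : ∀ s, ∑ t, q s * m t / r = q s * (r / r) := by
        intro s
        rw [Finset.sum_congr rfl fun t _ => show q s * m t / r = q s / r * m t by ring,
          ← Finset.mul_sum, hmsum]
        ring
      rw [Finset.sum_congr rfl fun s _ => h1 s, ← Finset.sum_mul, hqsum]
    rw [Finset.sum_sub_distrib, hsum1, hsum2]
    rcases eq_or_lt_of_le hr with h | h
    · rw [← h]; simp
    · rw [div_self h.ne']; simp
  have KEY : ∑ x : S × T, (Real.negMulLog (p x.1 x.2) + -(p x.1 x.2 * Real.log r))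
      ≤ ∑ x : S × T, (-(p x.1 x.2 * Real.log (q x.1)) + -(p x.1 x.2 * Real.log (m x.2))
          - (p x.1 x.2 - q x.1 * m x.2 / r)) := by
    apply Finset.sum_le_sum
    rintro ⟨s, t⟩ _
    dsimp only
    rcases eq_or_lt_of_le (hp s t) with h0 | h0
    · rw [← h0]
      have hrest : (0:ℝ) ≤ q s * m t / r := div_nonneg (mul_nonneg (hq s) (hm t)) hr
      simp only [Real.negMulLog_zero, zero_mul, neg_zero, add_zero, zero_sub, sub_neg_eq_add,
        zero_add]
      linarith
    · have hq0 : 0 < q s := lt_of_lt_of_le h0 (hpq s t)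
      have hm0 : 0 < m t := lt_of_lt_of_le h0 (hpm s t)
      have hr0 : 0 < r := lt_of_lt_of_le hq0 (hqr s)
      have hlog := Real.log_le_sub_one_of_pos
        (show 0 < q s * m t / (p s t * r) by positivity)
      have hexp : Real.log (q s * m t / (p s t * r))
          = Real.log (q s) + Real.log (m t) - Real.log (p s t) - Real.log r := by
        rw [Real.log_div (by positivity) (by positivity),
          Real.log_mul hq0.ne' hm0.ne', Real.log_mul h0.ne' hr0.ne']
        ring
      have h2 := mul_le_mul_of_nonneg_left hlog h0.le
      rw [hexp] at h2
      have h3 : p s t * (q s * m t / (p s t * r) - 1) = q s * m t / r - p s t := by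
        field_simp
      rw [h3] at h2
      rw [negMulLog_eq']
      nlinarith [h2]
  rw [E0, E1, E2, E3]
  calc (∑ x : S × T, Real.negMulLog (p x.1 x.2)) + ∑ x : S × T, -(p x.1 x.2 * Real.log r)
      = ∑ x : S × T, (Real.negMulLog (p x.1 x.2) + -(p x.1 x.2 * Real.log r)) :=
        Finset.sum_add_distrib.symm
    _ ≤ ∑ x : S × T, (-(p x.1 x.2 * Real.log (q x.1)) + -(p x.1 x.2 * Real.log (m x.2))
          - (p x.1 x.2 - q x.1 * m x.2 / r)) := KEY
    _ = ∑ x : S × T, (-(p x.1 x.2 * Real.log (q x.1)) + -(p x.1 x.2 * Real.log (m x.2)))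
          - ∑ x : S × T, (p x.1 x.2 - q x.1 * m x.2 / r) := Finset.sum_sub_distrib _ _
    _ ≤ ∑ x : S × T, (-(p x.1 x.2 * Real.log (q x.1)) + -(p x.1 x.2 * Real.log (m x.2))) := by
        linarith
    _ = (∑ x : S × T, -(p x.1 x.2 * Real.log (q x.1)))
          + ∑ x : S × T, -(p x.1 x.2 * Real.log (m x.2)) := Finset.sum_add_distrib

lemma pm_comp_sum {S T ι : Type*} [Fintype S] [Fintype ι] {X : Ω → S} (hX : FM X)
    (g : S → T) (t : T) (e : ι → S) (he : ∀ i, g (e i) = t)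
    (hinj : Function.Injective e) (hsurj : ∀ s, g s = t → ∃ i, e i = s) :
    pm μ (fun ω => g (X ω)) t = ∑ i, pm μ X (e i) := by
  classical
  rw [pm_comp hX g t]
  have hF : Finset.univ.filter (fun s => g s = t) = Finset.univ.image e := by
    ext s
    simp only [Finset.mem_filter, Finset.mem_univ, true_and, Finset.mem_image]
    exact ⟨fun h => hsurj s h, fun ⟨i, hi⟩ => by rw [← hi]; exact he i⟩
  rw [hF, Finset.sum_image (fun a _ b _ h => hinj h)]

/-- reorder a triple sum -/
lemma sum_triple {S T U M : Type*} [AddCommMonoid M] [Fintype S] [Fintype T] [Fintype U]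
    (f : S × T × U → M) : ∑ x, f x = ∑ u, ∑ s, ∑ t, f (s, t, u) := by
  rw [Fintype.sum_prod_type]
  have h1 : ∀ s : S, ∑ y : T × U, f (s, y) = ∑ u, ∑ t, f (s, t, u) := fun s => by
    rw [Fintype.sum_prod_type, Finset.sum_comm]
  rw [Finset.sum_congr rfl fun s _ => h1 s, Finset.sum_comm]

/-- Submodularity of entropy: `H(X,Y,Z) + H(Z) ≤ H(X,Z) + H(Y,Z)`. -/
lemma submodular {S T U : Type*} [Fintype S] [Fintype T] [Fintype U]
    {X : Ω → S} {Y : Ω → T} {Z : Ω → U} (hX : FM X) (hY : FM Y) (hZ : FM Z) :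
    entropy μ (fun ω => (X ω, Y ω, Z ω)) + entropy μ Z
      ≤ entropy μ (fun ω => (X ω, Z ω)) + entropy μ (fun ω => (Y ω, Z ω)) := by
  classical
  have h3 : FM (fun ω => (X ω, Y ω, Z ω)) := hX.pair (hY.pair hZ)
  -- marginal identities
  have M1 : ∀ s u, pm μ (fun ω => (X ω, Z ω)) (s, u)
      = ∑ t, pm μ (fun ω => (X ω, Y ω, Z ω)) (s, t, u) := by
    intro s u
    refine pm_comp_sum h3 (fun x => (x.1, x.2.2)) (s, u) (fun t => (s, t, u))
      (fun t => rfl) (fun a b h => by simpa using h) (fun x hx => ?_)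
    obtain ⟨a, b, c⟩ := x
    simp only [Prod.mk.injEq] at hx
    exact ⟨b, by simp [hx.1, hx.2]⟩
  have M2 : ∀ t u, pm μ (fun ω => (Y ω, Z ω)) (t, u)
      = ∑ s, pm μ (fun ω => (X ω, Y ω, Z ω)) (s, t, u) := by
    intro t u
    refine pm_comp_sum h3 (fun x => (x.2.1, x.2.2)) (t, u) (fun s => (s, t, u))
      (fun s => rfl) (fun a b h => by simpa using h) (fun x hx => ?_)
    obtain ⟨a, b, c⟩ := x
    simp only [Prod.mk.injEq] at hx
    exact ⟨a, by simp [hx.1, hx.2]⟩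
  have M3 : ∀ u, pm μ Z u
      = ∑ y : S × T, pm μ (fun ω => (X ω, Y ω, Z ω)) (y.1, y.2, u) := by
    intro u
    refine pm_comp_sum h3 (fun x => x.2.2) u (fun y : S × T => (y.1, y.2, u))
      (fun y => rfl) (fun a b h => ?_) (fun x hx => ?_)
    · obtain ⟨a1, a2⟩ := a; obtain ⟨b1, b2⟩ := b
      simpa using h
    · obtain ⟨a, b, c⟩ := x
      simp only at hx
      exact ⟨(a, b), by simp [hx]⟩
  -- apply the plane inequality for each u and sum
  have key : ∀ u : U,
      (∑ s, ∑ t, Real.negMulLog (pm μ (fun ω => (X ω, Y ω, Z ω)) (s, t, u)))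
        + Real.negMulLog (∑ s, ∑ t, pm μ (fun ω => (X ω, Y ω, Z ω)) (s, t, u))
      ≤ (∑ s, Real.negMulLog (∑ t, pm μ (fun ω => (X ω, Y ω, Z ω)) (s, t, u)))
        + ∑ t, Real.negMulLog (∑ s, pm μ (fun ω => (X ω, Y ω, Z ω)) (s, t, u)) := fun u =>
    submod_plane (fun s t => pm μ (fun ω => (X ω, Y ω, Z ω)) (s, t, u))
      (fun s t => pm_nonneg _ _)
  have hsummed := Finset.sum_le_sum (fun u (_ : u ∈ Finset.univ) => key u)
  rw [Finset.sum_add_distrib, Finset.sum_add_distrib] at hsummed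
  -- identify the four entropies
  have I0 : entropy μ (fun ω => (X ω, Y ω, Z ω))
      = ∑ u, ∑ s, ∑ t, Real.negMulLog (pm μ (fun ω => (X ω, Y ω, Z ω)) (s, t, u)) := by
    rw [entropy_eq, sum_triple]
  have I1 : entropy μ Z
      = ∑ u, Real.negMulLog (∑ s, ∑ t, pm μ (fun ω => (X ω, Y ω, Z ω)) (s, t, u)) := by
    rw [entropy_eq]
    refine Finset.sum_congr rfl fun u _ => ?_
    rw [M3 u, Fintype.sum_prod_type]
  have I2 : entropy μ (fun ω => (X ω, Z ω))
      = ∑ u, ∑ s, Real.negMulLog (∑ t, pm μ (fun ω => (X ω, Y ω, Z ω)) (s, t, u)) := by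
    rw [entropy_eq, Fintype.sum_prod_type, Finset.sum_comm]
    exact Finset.sum_congr rfl fun u _ => Finset.sum_congr rfl fun s _ => by rw [M1 s u]
  have I3 : entropy μ (fun ω => (Y ω, Z ω))
      = ∑ u, ∑ t, Real.negMulLog (∑ s, pm μ (fun ω => (X ω, Y ω, Z ω)) (s, t, u)) := by
    rw [entropy_eq, Fintype.sum_prod_type, Finset.sum_comm]
    exact Finset.sum_congr rfl fun u _ => Finset.sum_congr rfl fun t _ => by rw [M2 t u]
  rw [I0, I1, I2, I3]
  exact hsummed
variable {S T U V' : Type*} [Fintype S] [Fintype T] [Fintype U] [Fintype V']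

lemma cond_nonneg {X : Ω → S} {Y : Ω → T} (hX : FM X) (hY : FM Y) :
    0 ≤ condEntropy μ X Y := by
  rw [condEntropy, sub_nonneg]
  exact entropy_comp_le (X := fun ω => (X ω, Y ω)) (hX.pair hY) Prod.snd

lemma cond_comp_le {X : Ω → S} {Z : Ω → U} (hX : FM X) (hZ : FM Z) (g : S → T) :
    condEntropy μ (fun ω => g (X ω)) Z ≤ condEntropy μ X Z := by
  rw [condEntropy, condEntropy]
  apply sub_le_sub_right
  exact entropy_comp_le (X := fun ω => (X ω, Z ω)) (hX.pair hZ) (fun p => (g p.1, p.2))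

lemma cond_comp_inj {X : Ω → S} {Z : Ω → U} (hX : FM X) (hZ : FM Z) {g : S → T}
    (hg : Function.Injective g) :
    condEntropy μ (fun ω => g (X ω)) Z = condEntropy μ X Z := by
  rw [condEntropy, condEntropy]
  have h1 : entropy μ (fun ω => (g (X ω), Z ω)) = entropy μ (fun ω => (X ω, Z ω)) :=
    entropy_comp_inj (X := fun ω => (X ω, Z ω)) (hX.pair hZ)
      (g := fun p => (g p.1, p.2))
      (by rintro ⟨a, b⟩ ⟨c, d⟩ h
          simp only [Prod.mk.injEq] at h
          simp [hg h.1, h.2])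
  rw [h1]

lemma cond_cond_inj {X : Ω → S} {Y : Ω → T} (hX : FM X) (hY : FM Y) {e : T → U}
    (he : Function.Injective e) :
    condEntropy μ X (fun ω => e (Y ω)) = condEntropy μ X Y := by
  have h1 : entropy μ (fun ω => (X ω, e (Y ω))) = entropy μ (fun ω => (X ω, Y ω)) :=
    entropy_comp_inj (X := fun ω => (X ω, Y ω)) (hX.pair hY)
      (g := fun p => (p.1, e p.2))
      (by rintro ⟨a, b⟩ ⟨c, d⟩ h
          simp only [Prod.mk.injEq] at h
          simp [h.1, he h.2])
  have h2 : entropy μ (fun ω => e (Y ω)) = entropy μ Y := entropy_comp_inj hY he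
  rw [condEntropy, condEntropy, h1, h2]

lemma entropy_pair_comm {X : Ω → S} {Y : Ω → T} (hX : FM X) (hY : FM Y) :
    entropy μ (fun ω => (X ω, Y ω)) = entropy μ (fun ω => (Y ω, X ω)) :=
  (entropy_comp_inj (X := fun ω => (X ω, Y ω)) (hX.pair hY) (g := Prod.swap)
    Prod.swap_injective).symm

lemma entropy_swap3 {X : Ω → S} {Y : Ω → T} {Z : Ω → U} (hX : FM X) (hY : FM Y) (hZ : FM Z) :
    entropy μ (fun ω => (X ω, Y ω, Z ω)) = entropy μ (fun ω => (Y ω, X ω, Z ω)) :=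
  (entropy_comp_inj (X := fun ω => (X ω, Y ω, Z ω)) (hX.pair (hY.pair hZ))
    (g := fun p => (p.2.1, (p.1, p.2.2)))
    (by rintro ⟨a, b, c⟩ ⟨d, e', f⟩ h; simp only [Prod.mk.injEq] at h ⊢; tauto)).symm

/-- Chain rule: `H(X,Y | Z) = H(X | Y,Z) + H(Y | Z)`. -/
lemma chain {X : Ω → S} {Y : Ω → T} {Z : Ω → U} (hX : FM X) (hY : FM Y) (hZ : FM Z) :
    condEntropy μ (fun ω => (X ω, Y ω)) Z
      = condEntropy μ X (fun ω => (Y ω, Z ω)) + condEntropy μ Y Z := by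
  have h1 : entropy μ (fun ω => ((X ω, Y ω), Z ω))
      = entropy μ (fun ω => (X ω, Y ω, Z ω)) :=
    (entropy_comp_inj (X := fun ω => ((X ω, Y ω), Z ω)) ((hX.pair hY).pair hZ)
      (g := fun p => (p.1.1, (p.1.2, p.2)))
      (by rintro ⟨⟨a, b⟩, c⟩ ⟨⟨d, e'⟩, f⟩ h; simp only [Prod.mk.injEq] at h ⊢; tauto)).symm
  simp only [condEntropy]
  rw [h1]
  ring

/-- Conditioning on a pair vs. its first component. -/
lemma cond_pair_le {X : Ω → S} {U' : Ω → T} {V : Ω → U} (hX : FM X) (hU : FM U')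
    (hV : FM V) :
    condEntropy μ X (fun ω => (U' ω, V ω)) ≤ condEntropy μ X U' := by
  have hsub := submodular (μ := μ) hX hV hU
  have h1 : entropy μ (fun ω => (X ω, V ω, U' ω))
      = entropy μ (fun ω => (X ω, U' ω, V ω)) :=
    entropy_comp_inj (X := fun ω => (X ω, U' ω, V ω)) (hX.pair (hU.pair hV))
      (g := fun p => (p.1, (p.2.2, p.2.1)))
      (by rintro ⟨a, b, c⟩ ⟨d, e', f⟩ h; simp only [Prod.mk.injEq] at h ⊢; tauto)
  have h2 : entropy μ (fun ω => (V ω, U' ω)) = entropy μ (fun ω => (U' ω, V ω)) :=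
    entropy_pair_comm hV hU
  simp only [condEntropy]
  rw [h1, h2] at hsub
  linarith

/-- Conditioning on a function of `Y` can only increase conditional entropy. -/
lemma cond_mono {X : Ω → S} {Y : Ω → T} (hX : FM X) (hY : FM Y) (h : T → U) :
    condEntropy μ X Y ≤ condEntropy μ X (fun ω => h (Y ω)) := by
  have e1 : condEntropy μ X (fun ω => (h (Y ω), Y ω)) = condEntropy μ X Y :=
    cond_cond_inj hX hY (e := fun y => ((h y, y) : U × T))
      (fun a b hab => congrArg Prod.snd hab)
  have e2 : condEntropy μ X (fun ω => (h (Y ω), Y ω)) ≤ condEntropy μ X (fun ω => h (Y ω)) :=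
    cond_pair_le hX (hY.comp h) hY
  linarith

/-- Subadditivity of conditional entropy over a pair. -/
lemma subadd_pair {U' : Ω → S} {V : Ω → T} {Q : Ω → U} (hU : FM U') (hV : FM V)
    (hQ : FM Q) :
    condEntropy μ (fun ω => (U' ω, V ω)) Q ≤ condEntropy μ U' Q + condEntropy μ V Q := by
  have hsub := submodular (μ := μ) hU hV hQ
  have h1 : entropy μ (fun ω => ((U' ω, V ω), Q ω))
      = entropy μ (fun ω => (U' ω, V ω, Q ω)) :=
    (entropy_comp_inj (X := fun ω => ((U' ω, V ω), Q ω)) ((hU.pair hV).pair hQ)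
      (g := fun p => (p.1.1, (p.1.2, p.2)))
      (by rintro ⟨⟨a, b⟩, c⟩ ⟨⟨d, e'⟩, f⟩ h; simp only [Prod.mk.injEq] at h ⊢; tauto)).symm
  simp only [condEntropy]
  rw [h1]
  linarith

lemma cond_const {Q : Ω → U} (hQ : FM Q) (c : S) :
    condEntropy μ (fun _ : Ω => c) Q = 0 := by
  have h : entropy μ (fun ω => ((c : S), Q ω)) = entropy μ Q :=
    entropy_comp_inj (X := Q) hQ (g := fun q => ((c : S), q))
      (fun a b h => by simpa using h)
  rw [condEntropy, h, sub_self]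

/-- Subadditivity of conditional entropy over a finite tuple. -/
lemma cond_tuple_le {ι α' : Type*} [Fintype ι] [DecidableEq ι] [Nonempty ι] [Fintype α']
    {X : ι → Ω → α'} {Q : Ω → U} (hX : ∀ i, FM (X i)) (hQ : FM Q) :
    condEntropy μ (fun ω => fun i => X i ω) Q ≤ ∑ i, condEntropy μ (X i) Q := by
  have hΩ : Nonempty Ω := by
    by_contra h
    rw [not_nonempty_iff] at h
    have h1 : μ Set.univ = 1 := measure_univ
    rw [Set.univ_eq_empty_iff.mpr h, measure_empty] at h1
    exact zero_ne_one h1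
  obtain ⟨ω₀⟩ := hΩ
  set d : α' := X (Classical.arbitrary ι) ω₀ with hd
  have main : ∀ F : Finset ι,
      condEntropy μ (fun ω => fun i => if i ∈ F then X i ω else d) Q
        ≤ ∑ i ∈ F, condEntropy μ (X i) Q := by
    intro F
    induction F using Finset.induction_on with
    | empty =>
      simp only [Finset.notMem_empty, if_false, Finset.sum_empty]
      exact le_of_eq (cond_const hQ _)
    | @insert i F hiF ih =>
      have hFm : FM (fun ω => fun j => if j ∈ F then X j ω else d) := by
        apply FM.pi
        intro j
        by_cases hj : j ∈ F
        · have : (fun ω => if j ∈ F then X j ω else d) = X j := by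
            funext ω; rw [if_pos hj]
          rw [this]; exact hX j
        · have : (fun ω => if j ∈ F then X j ω else d) = fun _ => d := by
            funext ω; rw [if_neg hj]
          rw [this]; exact FM.const d
      have heq : (fun ω => fun j => if j ∈ insert i F then X j ω else d)
          = (fun ω => (fun p : α' × (ι → α') => Function.update p.2 i p.1)
              ((X i ω, fun j => if j ∈ F then X j ω else d))) := by
        funext ω
        funext j
        by_cases hj : j = i
        · subst hj; simp
        · simp [Function.update_of_ne hj, Finset.mem_insert, hj]
      rw [heq]
      calc condEntropy μ (fun ω => (fun p : α' × (ι → α') => Function.update p.2 i p.1)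
              ((X i ω, fun j => if j ∈ F then X j ω else d))) Q
          ≤ condEntropy μ (fun ω => (X i ω, fun j => if j ∈ F then X j ω else d)) Q :=
            cond_comp_le (X := fun ω => (X i ω, fun j => if j ∈ F then X j ω else d))
              ((hX i).pair hFm) hQ (fun p : α' × (ι → α') => Function.update p.2 i p.1)
        _ ≤ condEntropy μ (X i) Q
              + condEntropy μ (fun ω => fun j => if j ∈ F then X j ω else d) Q :=
            subadd_pair (hX i) hFm hQ
        _ ≤ condEntropy μ (X i) Q + ∑ j ∈ F, condEntropy μ (X j) Q := by linarith
        _ = ∑ j ∈ insert i F, condEntropy μ (X j) Q := (Finset.sum_insert (f := fun j => condEntropy μ (X j) Q) hiF).symm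
  have hfull := main Finset.univ
  have hall : (fun ω => fun i => if i ∈ Finset.univ then X i ω else d)
      = fun ω => fun i => X i ω := by
    funext ω i; simp
  rw [hall] at hfull
  exact hfull
end PIRAux



/-- Per-message download lower bound in the converse for local PIR on the cyclic graph `C_N`
(server `n` stores `W_n, W_{n−1}`, indices mod `N`, realized on `Fin N`): for a fixed desired
index `k`, if the messages are mutually independent with `H(W_j) = L`, the queries `Q` are
independent of the messages, each answer `A_n^{[k]}` (here `A n`) is a deterministic function
of `(W_n, W_{n−1}, Q)`, `W_k` is decodable from all the answers and `Q`, and the privacy-swap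
equalities `H(A_k^{[k]} | W_k, Q) = H(A_k^{[k−1]} | W_k, Q)` and
`H(A_{k+1}^{[k]} | W_k, W_{k−1}, Q) = H(A_{k+1}^{[k+1]} | W_k, W_{k−1}, Q)` hold, then
`∑_n H(A_n^{[k]} | Q) ≥ L + H(A_k^{[k−1]} | W_k, Q) + H(A_{k+1}^{[k+1]} | W_k, W_{k−1}, Q)`. -/
theorem stmt_11 {Ω : Type*} [MeasurableSpace Ω] (μ : Measure Ω) [IsProbabilityMeasure μ]
    (N : ℕ) [NeZero N] (hN : 3 ≤ N) (L : ℝ) (hL : 0 ≤ L) (k : Fin N)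
    {σ β α : Type*} [Fintype σ] [Fintype β] [Fintype α]
    [MeasurableSpace σ] [MeasurableSingletonClass σ]
    [MeasurableSpace β] [MeasurableSingletonClass β]
    [MeasurableSpace α] [MeasurableSingletonClass α]
    (W : Fin N → Ω → σ) (Q : Ω → β) (A : Fin N → Ω → α) (Akm Akp : Ω → α)
    (hWmeas : ∀ j, Measurable (W j)) (hQmeas : Measurable Q)
    (hAmeas : ∀ n, Measurable (A n)) (hAkm : Measurable Akm) (hAkp : Measurable Akp)
    (hWindep : iIndepFun W μ)
    (hWent : ∀ j, entropy μ (W j) = L)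
    (hQindep : mutualInfo μ (fun ω => (fun j => W j ω)) Q = 0)
    (hdet : ∀ n, condEntropy μ (A n) (fun ω => (W n ω, W (n - 1) ω, Q ω)) = 0)
    (hdec : condEntropy μ (W k) (fun ω => ((fun n => A n ω), Q ω)) = 0)
    (hpriv1 : condEntropy μ (A k) (fun ω => (W k ω, Q ω))
      = condEntropy μ Akm (fun ω => (W k ω, Q ω)))
    (hpriv2 : condEntropy μ (A (k + 1)) (fun ω => (W k ω, W (k - 1) ω, Q ω))
      = condEntropy μ Akp (fun ω => (W k ω, W (k - 1) ω, Q ω))) :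
    ∑ n : Fin N, condEntropy μ (A n) Q
      ≥ L + condEntropy μ Akm (fun ω => (W k ω, Q ω))
        + condEntropy μ Akp (fun ω => (W k ω, W (k - 1) ω, Q ω)) := by
  classical
  have FW : ∀ j, PIRAux.FM (W j) := fun j => PIRAux.FM.of_meas (hWmeas j)
  have FQ : PIRAux.FM Q := PIRAux.FM.of_meas hQmeas
  have FA : ∀ n, PIRAux.FM (A n) := fun n => PIRAux.FM.of_meas (hAmeas n)
  have FWT : PIRAux.FM (fun ω => (fun j => W j ω)) := PIRAux.FM.pi FW
  have FAT : PIRAux.FM (fun ω => (fun n => A n ω)) := PIRAux.FM.pi FA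
  have FWkQ : PIRAux.FM (fun ω => (W k ω, Q ω)) := (FW k).pair FQ
  have FZ3 : PIRAux.FM (fun ω => (W k ω, W (k - 1) ω, Q ω)) :=
    (FW k).pair ((FW (k - 1)).pair FQ)
  haveI hNE : Nonempty (Fin N) := ⟨⟨0, Nat.pos_of_ne_zero (NeZero.ne N)⟩⟩
  -- Step (c): `L ≤ H(W k | Q)`.
  have hWTQ : condEntropy μ (fun ω => (fun j => W j ω)) Q
      = entropy μ (fun ω => (fun j => W j ω)) := by
    rw [mutualInfo] at hQindep; linarith
  have hc1 : entropy μ (fun ω => ((fun j => W j ω), Q ω))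
      = entropy μ (fun ω => (W k ω, ((fun j => W j ω), Q ω))) :=
    (PIRAux.entropy_comp_inj (X := fun ω => ((fun j => W j ω), Q ω)) (FWT.pair FQ)
      (g := fun p => (p.1 k, p)) (fun a b h => congrArg Prod.snd h)).symm
  have hc2 : entropy μ (fun ω => (W k ω, ((fun j => W j ω), Q ω)))
      = entropy μ (fun ω => ((fun j => W j ω), (W k ω, Q ω))) :=
    PIRAux.entropy_swap3 (FW k) FWT FQ
  have hsplitW : condEntropy μ (fun ω => (fun j => W j ω)) Q
      = condEntropy μ (W k) Q
        + condEntropy μ (fun ω => (fun j => W j ω)) (fun ω => (W k ω, Q ω)) := by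
    simp only [condEntropy]
    linarith [hc1, hc2]
  have hcondle : condEntropy μ (fun ω => (fun j => W j ω)) (fun ω => (W k ω, Q ω))
      ≤ condEntropy μ (fun ω => (fun j => W j ω)) (W k) :=
    PIRAux.cond_mono (Y := fun ω => (W k ω, Q ω)) FWT FWkQ Prod.fst
  have hWTWk : condEntropy μ (fun ω => (fun j => W j ω)) (W k)
      = entropy μ (fun ω => (fun j => W j ω)) - entropy μ (W k) := by
    rw [condEntropy]
    have h : entropy μ (fun ω => ((fun j => W j ω), W k ω))
        = entropy μ (fun ω => (fun j => W j ω)) :=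
      PIRAux.entropy_comp_inj (X := fun ω => (fun j => W j ω)) FWT
        (g := fun v => (v, v k)) (fun a b h => congrArg Prod.fst h)
    rw [h]
  have hWkQ_ge : L ≤ condEntropy μ (W k) Q := by
    have hk := hWent k
    linarith [hWTQ, hsplitW, hcondle, hWTWk]
  -- Step (a): subadditivity over the tuple of answers.
  have ha : condEntropy μ (fun ω => (fun n => A n ω)) Q ≤ ∑ n, condEntropy μ (A n) Q :=
    PIRAux.cond_tuple_le FA FQ
  -- Step (b): decodability.
  have hb1 : entropy μ (fun ω => (W k ω, ((fun n => A n ω), Q ω)))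
      = entropy μ (fun ω => ((fun n => A n ω), Q ω)) := by
    rw [condEntropy] at hdec; linarith
  have hb2 : entropy μ (fun ω => (W k ω, ((fun n => A n ω), Q ω)))
      = entropy μ (fun ω => ((fun n => A n ω), (W k ω, Q ω))) :=
    PIRAux.entropy_swap3 (FW k) FAT FQ
  have hb : condEntropy μ (fun ω => (fun n => A n ω)) Q
      = condEntropy μ (W k) Q
        + condEntropy μ (fun ω => (fun n => A n ω)) (fun ω => (W k ω, Q ω)) := by
    simp only [condEntropy]
    linarith [hb1, hb2]
  -- Step (d): keep only the answers of servers `k` and `k+1`.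
  have hd : condEntropy μ (fun ω => (A k ω, A (k + 1) ω)) (fun ω => (W k ω, Q ω))
      ≤ condEntropy μ (fun ω => (fun n => A n ω)) (fun ω => (W k ω, Q ω)) :=
    PIRAux.cond_comp_le (X := fun ω => (fun n => A n ω)) FAT FWkQ
      (fun v => (v k, v (k + 1)))
  -- Step (e): chain rule.
  have hsw : condEntropy μ (fun ω => (A k ω, A (k + 1) ω)) (fun ω => (W k ω, Q ω))
      = condEntropy μ (fun ω => (A (k + 1) ω, A k ω)) (fun ω => (W k ω, Q ω)) :=
    PIRAux.cond_comp_inj (X := fun ω => (A (k + 1) ω, A k ω)) (Z := fun ω => (W k ω, Q ω))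
      ((FA (k + 1)).pair (FA k)) FWkQ (g := fun p : α × α => (p.2, p.1))
      (by rintro ⟨a, b⟩ ⟨c, d⟩ h; simp only [Prod.mk.injEq] at h ⊢; tauto)
  have he : condEntropy μ (fun ω => (A (k + 1) ω, A k ω)) (fun ω => (W k ω, Q ω))
      = condEntropy μ (A (k + 1)) (fun ω => (A k ω, W k ω, Q ω))
        + condEntropy μ (A k) (fun ω => (W k ω, Q ω)) :=
    PIRAux.chain (FA (k + 1)) (FA k) FWkQ
  -- Step (f): add `W (k-1)` to the conditioning.
  have hf : condEntropy μ (A (k + 1)) (fun ω => (A k ω, W k ω, W (k - 1) ω, Q ω))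
      ≤ condEntropy μ (A (k + 1)) (fun ω => (A k ω, W k ω, Q ω)) :=
    PIRAux.cond_mono (Y := fun ω => (A k ω, W k ω, W (k - 1) ω, Q ω)) (FA (k + 1))
      ((FA k).pair FZ3) (fun x => (x.1, x.2.1, x.2.2.2))
  -- Step (g): drop the deterministic `A k` from the conditioning.
  have hg : condEntropy μ (A (k + 1)) (fun ω => (A k ω, W k ω, W (k - 1) ω, Q ω))
      = condEntropy μ (A (k + 1)) (fun ω => (W k ω, W (k - 1) ω, Q ω)) := by
    have hdetk := hdet k
    have hg1 : entropy μ (fun ω => (A k ω, (A (k + 1) ω, W k ω, W (k - 1) ω, Q ω)))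
        = entropy μ (fun ω => (A (k + 1) ω, (A k ω, W k ω, W (k - 1) ω, Q ω))) :=
      PIRAux.entropy_swap3 (FA k) (FA (k + 1)) FZ3
    have hg2 : 0 ≤ condEntropy μ (A k) (fun ω => (A (k + 1) ω, W k ω, W (k - 1) ω, Q ω)) :=
      PIRAux.cond_nonneg (FA k) ((FA (k + 1)).pair FZ3)
    have hg3 : condEntropy μ (A k) (fun ω => (A (k + 1) ω, W k ω, W (k - 1) ω, Q ω))
        ≤ condEntropy μ (A k) (fun ω => (W k ω, W (k - 1) ω, Q ω)) :=
      PIRAux.cond_mono (Y := fun ω => (A (k + 1) ω, W k ω, W (k - 1) ω, Q ω)) (FA k)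
        ((FA (k + 1)).pair FZ3) Prod.snd
    rw [condEntropy] at hdetk
    simp only [condEntropy] at hg2 hg3 ⊢
    linarith [hg1, hg2, hg3, hdetk]
  rw [ge_iff_le, ← hpriv1, ← hpriv2]
  linarith [ha, hb, hd, hsw, he, hf, hg, hWkQ_ge]
end
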